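/- arXiv:2108.01637 — 7 statements merged into one kernel-verified Lean document; each statement's English description precedes it below -/
import Mathlib

section
/- Let H₂ be the 2N × n_v·N block matrix whose first block row consists of n_v copies of the N × N identity matrix and whose second block row is [P₁, P₂, …, P_{n_v}] for N × N permutation matrices Pᵢ. Let C = P₁ + P₂ + ⋯ + P_{n_v} (sum over ℕ). Then the Tanner graph of H₂ contains a cycle of length 2l if and only if the Tanner graph (bipartite graph with biadjacency structure given by nonzero entries) of C contains a cycle of length l. -/
open Matrix

/-- The permutation matrix (over ℕ) associated with a permutation. -/
def permMatrix {N : ℕ} (σ : Equiv.Perm (Fin N)) : Matrix (Fin N) (Fin N) ℕ :=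
  Matrix.of fun i j => if σ i = j then 1 else 0

/-- The Tanner graph of an ℕ-valued matrix: the bipartite simple graph on rows ⊕ columns
with an edge between row `i` and column `j` whenever `M i j ≠ 0`. -/
def tanner {α β : Type*} (M : Matrix α β ℕ) : SimpleGraph (α ⊕ β) :=
  SimpleGraph.fromRel fun u v => ∃ i j, u = Sum.inl i ∧ v = Sum.inr j ∧ M i j ≠ 0

open Classical in
/-- The girth of the Tanner (multi)graph of an ℕ-valued matrix: an entry `≥ 2` is a
multiple edge, giving girth `2`; otherwise the girth of the Tanner simple graph
(`⊤` if there is no cycle). -/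
noncomputable def matGirth {α β : Type*} (M : Matrix α β ℕ) : ℕ∞ :=
  if ∃ i j, 2 ≤ M i j then 2 else (tanner M).egirth


/-- The block matrix with first block row all identities and second block row the
permutation matrices `P j`. -/
def H2mat {N nv : ℕ} (P : Fin nv → Equiv.Perm (Fin N)) :
    Matrix (Fin 2 × Fin N) (Fin nv × Fin N) ℕ :=
  Matrix.of fun p q =>
    if p.1 = 0 then (if p.2 = q.2 then 1 else 0) else permMatrix (P q.1) p.2 q.2

namespace Stmt5Aux

open SimpleGraph Sum

lemma tanner_adj {α β : Type*} {M : Matrix α β ℕ} {u v : α ⊕ β} :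
    (tanner M).Adj u v ↔
      (∃ i j, u = inl i ∧ v = inr j ∧ M i j ≠ 0) ∨
      (∃ i j, u = inr j ∧ v = inl i ∧ M i j ≠ 0) := by
  rw [tanner, SimpleGraph.fromRel_adj]
  constructor
  · rintro ⟨-, (⟨i, j, rfl, rfl, h⟩ | ⟨i, j, rfl, rfl, h⟩)⟩
    · exact Or.inl ⟨i, j, rfl, rfl, h⟩
    · exact Or.inr ⟨i, j, rfl, rfl, h⟩
  · rintro (⟨i, j, rfl, rfl, h⟩ | ⟨i, j, rfl, rfl, h⟩)
    · exact ⟨by simp, Or.inl ⟨i, j, rfl, rfl, h⟩⟩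
    · exact ⟨by simp, Or.inr ⟨i, j, rfl, rfl, h⟩⟩

lemma tanner_adj_inl_inr {α β : Type*} {M : Matrix α β ℕ} {i : α} {j : β} :
    (tanner M).Adj (inl i) (inr j) ↔ M i j ≠ 0 := by
  simp [tanner_adj]

lemma tanner_adj_inr_inl {α β : Type*} {M : Matrix α β ℕ} {i : α} {j : β} :
    (tanner M).Adj (inr j) (inl i) ↔ M i j ≠ 0 := by
  rw [SimpleGraph.adj_comm]; exact tanner_adj_inl_inr

lemma not_tanner_adj_inl_inl {α β : Type*} {M : Matrix α β ℕ} {i i' : α} :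
    ¬ (tanner M).Adj (inl i) (inl i') := by simp [tanner_adj]

lemma not_tanner_adj_inr_inr {α β : Type*} {M : Matrix α β ℕ} {j j' : β} :
    ¬ (tanner M).Adj (inr j) (inr j') := by simp [tanner_adj]

variable {N nv : ℕ} {P : Fin nv → Equiv.Perm (Fin N)}

lemma Centry (P : Fin nv → Equiv.Perm (Fin N)) (i k : Fin N) :
    (∑ j, permMatrix (P j)) i k = (Finset.univ.filter fun j => P j i = k).card := by
  rw [Finset.card_filter]
  simp [Matrix.sum_apply, permMatrix]

lemma Centry_ne_zero {i k : Fin N} :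
    (∑ j, permMatrix (P j)) i k ≠ 0 ↔ ∃ j, P j i = k := by
  rw [Centry]
  rw [Finset.card_ne_zero, Finset.filter_nonempty_iff]
  simp

lemma two_le_Centry {i k : Fin N} :
    2 ≤ (∑ j, permMatrix (P j)) i k ↔ ∃ j j', j ≠ j' ∧ P j i = k ∧ P j' i = k := by
  rw [Centry, show (2:ℕ) ≤ _ ↔ 1 < _ from Iff.rfl, Finset.one_lt_card]
  constructor
  · rintro ⟨a, ha, b, hb, hab⟩
    simp only [Finset.mem_filter] at ha hb
    exact ⟨a, b, hab, ha.2, hb.2⟩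
  · rintro ⟨a, b, hab, ha, hb⟩
    exact ⟨a, by simp [ha], b, by simp [hb], hab⟩

lemma H2_ne_zero {p : Fin 2 × Fin N} {q : Fin nv × Fin N} :
    H2mat P p q ≠ 0 ↔ (p.1 = 0 ∧ p.2 = q.2) ∨ (p.1 = 1 ∧ P q.1 p.2 = q.2) := by
  rcases p with ⟨e, m⟩
  fin_cases e <;> simp [H2mat, permMatrix]

lemma adjH_iff {a : Fin 2 × Fin N} {x : Fin nv × Fin N} :
    (tanner (H2mat P)).Adj (inl a) (inr x) ↔
      ((a.1 = 0 ∧ a.2 = x.2) ∨ (a.1 = 1 ∧ P x.1 a.2 = x.2)) := by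
  rw [tanner_adj_inl_inr, H2_ne_zero]

end Stmt5Aux

namespace Stmt5Aux
open SimpleGraph Sum
variable {N nv : ℕ} {P : Fin nv → Equiv.Perm (Fin N)}

def fV (nv : ℕ) (x : Fin N ⊕ Fin N) : (Fin 2 × Fin N) ⊕ (Fin nv × Fin N) :=
  x.elim (fun i => inl (1, i)) (fun k => inl (0, k))

lemma fV_inj : Function.Injective (fV (N := N) nv) := by
  rintro (i | k) (i' | k') h <;> simp [fV, Prod.ext_iff] at h <;> simp [h]

lemma edge_pair {u v : Fin N ⊕ Fin N} (h : (tanner (∑ j, permMatrix (P j))).Adj u v) :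
    ∃ (j : Fin nv) (k : Fin N),
      (tanner (H2mat P)).Adj (fV nv u) (inr (j, k)) ∧
      (tanner (H2mat P)).Adj (inr (j, k)) (fV nv v) ∧
      s(Sum.inl ((P j)⁻¹ k), Sum.inr k) = s(u, v) := by
  rw [tanner_adj] at h
  rcases h with ⟨i, k, rfl, rfl, hik⟩ | ⟨i, k, rfl, rfl, hik⟩ <;>
    obtain ⟨j, hj⟩ := Centry_ne_zero.mp hik
  · refine ⟨j, k, ?_, ?_, ?_⟩
    · exact adjH_iff.mpr (Or.inr ⟨rfl, hj⟩)
    · exact tanner_adj_inr_inl.mpr (H2_ne_zero.mpr (Or.inl ⟨rfl, rfl⟩))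
    · have : (P j)⁻¹ k = i := by simp [← hj]
      rw [this]
  · refine ⟨j, k, ?_, ?_, ?_⟩
    · exact adjH_iff.mpr (Or.inl ⟨rfl, rfl⟩)
    · exact tanner_adj_inr_inl.mpr (H2_ne_zero.mpr (Or.inr ⟨rfl, hj⟩))
    · have : (P j)⁻¹ k = i := by simp [← hj]
      rw [this, Sym2.eq_swap]

lemma liftWalk {u v : Fin N ⊕ Fin N} (w : (tanner (∑ j, permMatrix (P j))).Walk u v) :
    ∃ W : (tanner (H2mat P)).Walk (fV nv u) (fV nv v),
      W.length = 2 * w.length ∧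
      (∀ x ∈ W.support, (∃ y ∈ w.support, x = fV nv y) ∨
        ∃ j k, x = inr (j, k) ∧ s(Sum.inl ((P j)⁻¹ k), Sum.inr k) ∈ w.edges) ∧
      (∀ e ∈ W.edges, ∃ j k,
        (inr (j, k) : (Fin 2 × Fin N) ⊕ (Fin nv × Fin N)) ∈ e ∧
        s(Sum.inl ((P j)⁻¹ k), Sum.inr k) ∈ w.edges) ∧
      (w.IsPath → W.IsPath) := by
  induction w with
  | nil =>
    exact ⟨.nil, by simp, by simp, by simp, fun _ => by simp⟩
  | @cons u b v h q ih =>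
    obtain ⟨j, k, H1, H2, hrec⟩ := edge_pair h
    obtain ⟨Wq, hlen, hsup, hedg, hpath⟩ := ih
    refine ⟨.cons H1 (.cons H2 Wq), ?_, ?_, ?_, ?_⟩
    · simp [hlen]; ring
    · intro x hx
      simp only [Walk.support_cons, List.mem_cons] at hx
      rcases hx with rfl | rfl | hx
      · exact Or.inl ⟨u, by simp, rfl⟩
      · exact Or.inr ⟨j, k, rfl, by rw [hrec]; simp⟩
      · rcases hsup x hx with ⟨y, hy, rfl⟩ | ⟨j', k', rfl, hmem⟩
        · exact Or.inl ⟨y, by simp [hy], rfl⟩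
        · exact Or.inr ⟨j', k', rfl, by rw [Walk.edges_cons]; exact List.mem_cons_of_mem _ hmem⟩
    · intro e he
      simp only [Walk.edges_cons, List.mem_cons] at he
      rcases he with rfl | rfl | he
      · exact ⟨j, k, by simp, by rw [hrec]; simp⟩
      · exact ⟨j, k, by simp, by rw [hrec]; simp⟩
      · obtain ⟨j', k', hmem, hed⟩ := hedg e he
        exact ⟨j', k', hmem, by rw [Walk.edges_cons]; exact List.mem_cons_of_mem _ hed⟩
    · intro hw
      rw [Walk.cons_isPath_iff] at hw
      obtain ⟨hq, hu⟩ := hw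
      have hnotin : (inr (j, k) : (Fin 2 × Fin N) ⊕ (Fin nv × Fin N)) ∉ Wq.support := by
        intro hmem
        rcases hsup _ hmem with ⟨y, _, hy⟩ | ⟨j', k', hjk, hed⟩
        · cases y <;> simp [fV] at hy
        · obtain ⟨rfl, rfl⟩ : j' = j ∧ k' = k := by
            simpa [Prod.ext_iff] using hjk.symm
          rw [hrec] at hed
          exact hu (q.fst_mem_support_of_mem_edges hed)
      rw [Walk.cons_isPath_iff, Walk.cons_isPath_iff]
      refine ⟨⟨hpath hq, hnotin⟩, ?_⟩
      simp only [Walk.support_cons, List.mem_cons]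
      rintro (h1 | h2)
      · cases u <;> simp [fV] at h1
      · rcases hsup _ h2 with ⟨y, hy, hy2⟩ | ⟨j', k', hjk, _⟩
        · exact hu (fV_inj hy2 ▸ hy)
        · cases u <;> simp [fV] at hjk

lemma lift_cycle {v : Fin N ⊕ Fin N} (w : (tanner (∑ j, permMatrix (P j))).Walk v v)
    (hw : w.IsCycle) :
    ∃ v', ∃ W : (tanner (H2mat P)).Walk v' v', W.IsCycle ∧ W.length = 2 * w.length := by
  cases w with
  | nil => exact absurd rfl hw.ne_nil
  | @cons _ b _ h p =>
    rw [Walk.cons_isCycle_iff] at hw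
    obtain ⟨hp, he⟩ := hw
    obtain ⟨j, k, H1, H2, hrec⟩ := edge_pair h
    obtain ⟨Wp, hlen, hsup, hedg, hpath⟩ := liftWalk p
    refine ⟨fV nv v, .cons H1 (.cons H2 Wp), ?_, by simp [hlen]; ring⟩
    rw [Walk.cons_isCycle_iff]
    constructor
    · rw [Walk.cons_isPath_iff]
      refine ⟨hpath hp, ?_⟩
      intro hmem
      rcases hsup _ hmem with ⟨y, _, hy⟩ | ⟨j', k', hjk, hed⟩
      · cases y <;> simp [fV] at hy
      · obtain ⟨rfl, rfl⟩ : j' = j ∧ k' = k := by simpa [Prod.ext_iff] using hjk.symm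
        rw [hrec] at hed
        exact he hed
    · intro hmem
      simp only [Walk.edges_cons, List.mem_cons] at hmem
      rcases hmem with heq | hmem
      · rw [Sym2.eq_iff] at heq
        rcases heq with ⟨h1, -⟩ | ⟨h2, -⟩
        · cases v <;> simp [fV] at h1
        · exact h.ne (fV_inj h2)
      · obtain ⟨j', k', hjk, hed⟩ := hedg _ hmem
        rw [Sym2.mem_iff] at hjk
        rcases hjk with hjk | hjk
        · cases v <;> simp [fV] at hjk
        · obtain ⟨rfl, rfl⟩ : j' = j ∧ k' = k := by simpa [Prod.ext_iff] using hjk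
          rw [hrec] at hed
          exact he hed

end Stmt5Aux

namespace Stmt5Aux
open SimpleGraph Sum
variable {N nv : ℕ} {P : Fin nv → Equiv.Perm (Fin N)}

def gV (p : Fin 2 × Fin N) : Fin N ⊕ Fin N :=
  if p.1 = 0 then inr p.2 else inl p.2

lemma fV_gV (p : Fin 2 × Fin N) : fV nv (gV p) = inl p := by
  rcases p with ⟨e, m⟩
  fin_cases e <;> simp [fV, gV]

lemma multiedge_cycle {j j' : Fin nv} {a b : Fin N} (hj : j ≠ j')
    (h1 : P j a = b) (h2 : P j' a = b) :
    ∃ v, ∃ W : (tanner (H2mat P)).Walk v v, W.IsCycle ∧ W.length = 4 := by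
  have A1 : (tanner (H2mat P)).Adj (inl (0, b)) (inr (j, b)) :=
    adjH_iff.mpr (Or.inl ⟨rfl, rfl⟩)
  have A2 : (tanner (H2mat P)).Adj (inr (j, b)) (inl (1, a)) :=
    tanner_adj_inr_inl.mpr (H2_ne_zero.mpr (Or.inr ⟨rfl, h1⟩))
  have A3 : (tanner (H2mat P)).Adj (inl (1, a)) (inr (j', b)) :=
    adjH_iff.mpr (Or.inr ⟨rfl, h2⟩)
  have A4 : (tanner (H2mat P)).Adj (inr (j', b)) (inl (0, b)) :=
    tanner_adj_inr_inl.mpr (H2_ne_zero.mpr (Or.inl ⟨rfl, rfl⟩))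
  refine ⟨inl (0, b), .cons A1 (.cons A2 (.cons A3 (.cons A4 .nil))), ?_, by simp⟩
  rw [Walk.cons_isCycle_iff]
  constructor
  · simp [Walk.cons_isPath_iff, Walk.isPath_def, Prod.ext_iff, hj, Ne.symm hj]
  · simp [Walk.edges_cons, Sym2.eq_iff, Prod.ext_iff, hj, Ne.symm hj]

lemma adjH_inl {a : Fin 2 × Fin N} {y : (Fin 2 × Fin N) ⊕ (Fin nv × Fin N)}
    (h : (tanner (H2mat P)).Adj (inl a) y) : ∃ x, y = inr x := by
  cases y with
  | inl a' => exact absurd h not_tanner_adj_inl_inl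
  | inr x => exact ⟨x, rfl⟩

lemma adjH_inr {x : Fin nv × Fin N} {y : (Fin 2 × Fin N) ⊕ (Fin nv × Fin N)}
    (h : (tanner (H2mat P)).Adj (inr x) y) : ∃ a, y = inl a := by
  cases y with
  | inl a => exact ⟨a, rfl⟩
  | inr x' => exact absurd h not_tanner_adj_inr_inr

lemma fin2_cases (e : Fin 2) : e = 0 ∨ e = 1 := by omega

lemma proj_adj {a c : Fin 2 × Fin N} {j : Fin nv} {k : Fin N}
    (h1 : (tanner (H2mat P)).Adj (inl a) (inr (j, k)))
    (h2 : (tanner (H2mat P)).Adj (inr (j, k)) (inl c)) (hac : a ≠ c) :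
    (tanner (∑ j, permMatrix (P j))).Adj (gV a) (gV c) := by
  rw [adjH_iff] at h1
  rw [tanner_adj_inr_inl, H2_ne_zero] at h2
  rcases h1 with ⟨ha1, ha2⟩ | ⟨ha1, ha2⟩ <;> rcases h2 with ⟨hc1, hc2⟩ | ⟨hc1, hc2⟩
  · exact absurd (Prod.ext (ha1.trans hc1.symm) (ha2.trans hc2.symm)) hac
  · have : gV a = inr k := by simp [gV, ha1, ha2]
    have hc : gV c = inl c.2 := by simp [gV, hc1]
    rw [this, hc]
    exact tanner_adj_inr_inl.mpr (Centry_ne_zero.mpr ⟨j, hc2⟩)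
  · have : gV a = inl a.2 := by simp [gV, ha1]
    have hc : gV c = inr k := by simp [gV, hc1, hc2]
    rw [this, hc]
    exact tanner_adj_inl_inr.mpr (Centry_ne_zero.mpr ⟨j, ha2⟩)
  · refine absurd (Prod.ext (ha1.trans hc1.symm) ?_) hac
    exact (P j).injective (ha2.trans hc2.symm)

lemma four_cycle_multiedge {a c : Fin 2 × Fin N} {x y : Fin nv × Fin N}
    (h1 : (tanner (H2mat P)).Adj (inl a) (inr x))
    (h2 : (tanner (H2mat P)).Adj (inr x) (inl c))
    (h3 : (tanner (H2mat P)).Adj (inl c) (inr y))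
    (h4 : (tanner (H2mat P)).Adj (inr y) (inl a))
    (hac : a ≠ c) (hxy : x ≠ y) :
    ∃ i k, 2 ≤ (∑ j, permMatrix (P j)) i k := by
  rcases x with ⟨j, k⟩
  rcases y with ⟨j₂, k₂⟩
  rw [adjH_iff] at h1 h3
  rw [tanner_adj_inr_inl, H2_ne_zero] at h2 h4
  rcases h1 with ⟨ha1, ha2⟩ | ⟨ha1, ha2⟩
  · -- a.1 = 0
    rcases h2 with ⟨hc1, hc2⟩ | ⟨hc1, hc2⟩
    · exact absurd (Prod.ext (ha1.trans hc1.symm) (ha2.trans hc2.symm)) hac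
    · -- c.1 = 1, P j c.2 = k
      rcases h3 with ⟨hc1', _⟩ | ⟨_, hc2'⟩
      · rw [hc1] at hc1'; exact absurd hc1' (by decide)
      · rcases h4 with ⟨_, ha2'⟩ | ⟨ha1', _⟩
        · -- a.2 = k₂, so k₂ = k
          have hk : k₂ = k := ha2'.symm.trans ha2
          have hjj : j ≠ j₂ := fun hjeq => hxy (by rw [hjeq, hk])
          exact ⟨c.2, k, two_le_Centry.mpr ⟨j, j₂, hjj, hc2, hk ▸ hc2'⟩⟩
        · rw [ha1] at ha1'; exact absurd ha1' (by decide)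
  · -- a.1 = 1, P j a.2 = k
    rcases h2 with ⟨hc1, hc2⟩ | ⟨hc1, hc2⟩
    · -- c.1 = 0, c.2 = k
      rcases h3 with ⟨_, hc2'⟩ | ⟨hc1', _⟩
      · -- c.2 = k₂, so k₂ = k
        rcases h4 with ⟨ha1', _⟩ | ⟨_, ha2'⟩
        · rw [ha1] at ha1'; exact absurd ha1' (by decide)
        · have hk : k₂ = k := hc2'.symm.trans hc2
          have hjj : j ≠ j₂ := fun hjeq => hxy (by rw [hjeq, hk])
          exact ⟨a.2, k, two_le_Centry.mpr ⟨j, j₂, hjj, ha2, hk ▸ ha2'⟩⟩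
      · rw [hc1] at hc1'; exact absurd hc1' (by decide)
    · exact absurd (Prod.ext (ha1.trans hc1.symm)
        ((P j).injective (ha2.trans hc2.symm))) hac

lemma path_loop_nil {V : Type*} {G : SimpleGraph V} {v : V} (p : G.Walk v v)
    (hp : p.IsPath) : p = .nil := by
  cases p with
  | nil => rfl
  | cons h r =>
    rw [Walk.cons_isPath_iff] at hp
    exact absurd r.end_mem_support hp.2

lemma edge_notmem {V : Type*} {G : SimpleGraph V} {x y : V} (q : G.Walk x y)
    (hq : q.IsPath) (hlen : 2 ≤ q.length) : s(y, x) ∉ q.edges := by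
  induction q with
  | nil => simp
  | @cons x m y h r ihr =>
    rw [Walk.cons_isPath_iff] at hq
    obtain ⟨hr, hx⟩ := hq
    simp only [Walk.edges_cons, List.mem_cons]
    rintro (heq | hmem)
    · rw [Sym2.eq_iff] at heq
      rcases heq with ⟨rfl, rfl⟩ | ⟨rfl, -⟩
      · exact hx r.end_mem_support
      · have : r = .nil := path_loop_nil r hr
        rw [Walk.length_cons, this] at hlen
        simp at hlen
    · exact hx (r.snd_mem_support_of_mem_edges hmem)

end Stmt5Aux

namespace Stmt5Aux
open SimpleGraph Sum
variable {N nv : ℕ} {P : Fin nv → Equiv.Perm (Fin N)}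

lemma projWalk (n : ℕ) :
    ∀ {a b : Fin 2 × Fin N} (Q : (tanner (H2mat P)).Walk (inl a) (inl b)),
      Q.IsPath → Q.length = n →
      ∃ q : (tanner (∑ j, permMatrix (P j))).Walk (gV a) (gV b),
        n = 2 * q.length ∧ (q.support.map (fV nv)).Sublist Q.support := by
  induction n using Nat.strong_induction_on with
  | _ n IH =>
    intro a b Q hQ hn
    cases Q with
    | nil => exact ⟨.nil, by simp [← hn], by simp [fV_gV]⟩
    | @cons _ y _ h1 T =>
      obtain ⟨x, rfl⟩ := adjH_inl h1
      cases T with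
      | @cons _ z _ h2 Q2 =>
        obtain ⟨c, rfl⟩ := adjH_inr h2
        rcases x with ⟨j, k⟩
        rw [Walk.cons_isPath_iff] at hQ
        obtain ⟨hT, hainT⟩ := hQ
        rw [Walk.cons_isPath_iff] at hT
        obtain ⟨hQ2, hxQ2⟩ := hT
        have hac : a ≠ c := by
          rintro rfl
          exact hainT (by simp [Walk.support_cons, Q2.start_mem_support])
        have hlt : Q2.length < n := by simp [← hn]
        obtain ⟨q2, hq2len, hsub⟩ := IH Q2.length hlt Q2 hQ2 rfl
        refine ⟨.cons (proj_adj h1 h2 hac) q2, ?_, ?_⟩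
        · simp only [Walk.length_cons, ← hn, hq2len]; ring
        · simp only [Walk.support_cons, List.map_cons, fV_gV]
          exact (hsub.cons _).cons₂ _

lemma project_cycle {v : (Fin 2 × Fin N) ⊕ (Fin nv × Fin N)}
    (W : (tanner (H2mat P)).Walk v v) (hW : W.IsCycle) {l : ℕ}
    (hlen : W.length = 2 * l) :
    (l = 2 ∧ ∃ i k, 2 ≤ (∑ j, permMatrix (P j)) i k) ∨
      ∃ v', ∃ w : (tanner (∑ j, permMatrix (P j))).Walk v' v',
        w.IsCycle ∧ w.length = l := by
  obtain ⟨a, ha⟩ : ∃ a, (inl a : (Fin 2 × Fin N) ⊕ (Fin nv × Fin N)) ∈ W.support := by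
    cases v with
    | inl a => exact ⟨a, W.start_mem_support⟩
    | inr x =>
      cases W with
      | nil => exact absurd rfl hW.ne_nil
      | cons h T =>
        obtain ⟨a, rfl⟩ := adjH_inr h
        exact ⟨a, by simp [Walk.support_cons, T.start_mem_support]⟩
  have hW2 : (W.rotate _ ha).IsCycle := hW.rotate ha
  have hlen2 : (W.rotate _ ha).length = 2 * l := by
    rw [← Walk.length_darts, (Walk.rotate_darts W _ ha).perm.length_eq,
      Walk.length_darts, hlen]
  have h3 := hW2.three_le_length
  generalize hw2 : W.rotate _ ha = W2 at hW2 hlen2 h3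
  clear hw2 hW hlen ha
  cases W2 with
  | nil => exact absurd rfl hW2.ne_nil
  | @cons _ y _ h1 T =>
    rw [Walk.cons_isCycle_iff] at hW2
    obtain ⟨hT, hedge⟩ := hW2
    obtain ⟨x, rfl⟩ := adjH_inl h1
    cases T with
    | @cons _ z _ h2 Q =>
      obtain ⟨c, rfl⟩ := adjH_inr h2
      rcases x with ⟨j, k⟩
      have hTpath := hT
      rw [Walk.cons_isPath_iff] at hT
      obtain ⟨hQ, hxQ⟩ := hT
      obtain ⟨q, hqlen, hsub⟩ := projWalk Q.length Q hQ rfl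
      have hqpath : q.IsPath := by
        rw [Walk.isPath_def]
        exact (hsub.nodup ((Walk.isPath_def _).mp hQ)).of_map _
      have hlq : l = q.length + 1 := by
        simp only [Walk.length_cons] at hlen2; omega
      have hl2 : 2 ≤ l := by
        have h3' := h3
        simp only [Walk.length_cons] at hlen2 h3' ⊢
        omega
      have hac : a ≠ c := by
        rintro rfl
        have : Q = .nil := path_loop_nil Q hQ
        rw [this] at hqlen
        simp only [Walk.length_nil] at hqlen
        omega
      rcases Nat.lt_or_ge q.length 2 with hsmall | hbig
      · -- l = 2 case: q.length = 1
        have hql1 : q.length = 1 := by omega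
        -- Q has length 2
        have hQlen : Q.length = 2 := by omega
        cases Q with
        | nil => simp at hQlen
        | @cons _ y' _ h3' R =>
          obtain ⟨y, rfl⟩ := adjH_inl h3'
          cases R with
          | @cons _ z' _ h4 R0 =>
            obtain ⟨a', rfl⟩ := adjH_inr h4
            cases R0 with
            | nil =>
              have hxy : (j, k) ≠ y := by
                rintro rfl
                exact hxQ (by simp [Walk.support_cons])
              obtain ⟨i, k', hik⟩ := four_cycle_multiedge h1 h2 h3' h4 hac hxy
              exact Or.inl ⟨by omega, i, k', hik⟩
            | cons h5 R1 => simp [Walk.length_cons] at hQlen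
      · -- l ≥ 3 case
        refine Or.inr ⟨gV a, .cons (proj_adj h1 h2 hac) q, ?_, by simp [hlq]⟩
        rw [Walk.cons_isCycle_iff]
        exact ⟨hqpath, edge_notmem q hqpath hbig⟩

end Stmt5Aux

theorem stmt5 {N nv : ℕ} (P : Fin nv → Equiv.Perm (Fin N)) (l : ℕ) :
    (∃ v, ∃ w : (tanner (H2mat P)).Walk v v, w.IsCycle ∧ w.length = 2 * l) ↔
      ((l = 2 ∧ ∃ a b, 2 ≤ (∑ j, permMatrix (P j)) a b) ∨
        ∃ v, ∃ w : (tanner (∑ j, permMatrix (P j))).Walk v v, w.IsCycle ∧ w.length = l) := by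
  constructor
  · rintro ⟨v, W, hc, hlen⟩
    rcases Stmt5Aux.project_cycle W hc hlen with ⟨hl, i, k, hik⟩ | ⟨v', w, hw, hwl⟩
    · exact Or.inl ⟨hl, i, k, hik⟩
    · exact Or.inr ⟨v', w, hw, hwl⟩
  · rintro (⟨rfl, i, k, h2⟩ | ⟨v, w, hc, rfl⟩)
    · obtain ⟨j, j', hjj, h1, h2'⟩ := Stmt5Aux.two_le_Centry.mp h2
      obtain ⟨v', W, hW, hWl⟩ := Stmt5Aux.multiedge_cycle hjj h1 h2'
      exact ⟨v', W, hW, by rw [hWl]⟩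
    · obtain ⟨v', W, hW, hWl⟩ := Stmt5Aux.lift_cycle w hc
      exact ⟨v', W, hW, hWl⟩
end

section
/- Let H₂ be the 2N × n_v·N block matrix with block rows [I, …, I] and [P₁, …, P_{n_v}] where Pᵢ are N × N permutation matrices, and let C = Σᵢ Pᵢ. Then girth(H₂) = 2 · girth(C), where girth denotes the girth of the associated Tanner graph (with girth 2 assigned to a graph having a multiple edge). -/
open Matrix

namespace TannerAux

open SimpleGraph Sum

variable {α β : Type*} {M : Matrix α β ℕ}

lemma tanner_adj_inl_inr {i : α} {j : β} : (tanner M).Adj (inl i) (inr j) ↔ M i j ≠ 0 := by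
  simp [tanner, SimpleGraph.fromRel_adj]

lemma tanner_isLeft {u v : α ⊕ β} (h : (tanner M).Adj u v) : u.isLeft = !v.isLeft := by
  rcases h.2 with ⟨i, j, rfl, rfl, -⟩ | ⟨i, j, rfl, rfl, -⟩ <;> rfl

lemma tanner_adj_cases {u v : α ⊕ β} (h : (tanner M).Adj u v) :
    (∃ i j, u = inl i ∧ v = inr j ∧ M i j ≠ 0) ∨
    (∃ i j, v = inl i ∧ u = inr j ∧ M i j ≠ 0) := h.2

/-- parity of walks in a bipartite tanner graph -/
lemma tanner_walk_parity {u v : α ⊕ β} (w : (tanner M).Walk u v) :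
    Even w.length ↔ u.isLeft = v.isLeft := by
  induction w with
  | nil => simp
  | cons h p ih =>
    rw [SimpleGraph.Walk.length_cons, Nat.even_add_one, ih, tanner_isLeft h]
    cases (_ : α ⊕ β).isLeft <;> cases (_ : α ⊕ β).isLeft <;> simp_all

lemma tanner_closed_even {u : α ⊕ β} (w : (tanner M).Walk u u) : Even w.length :=
  (tanner_walk_parity w).2 rfl

end TannerAux

namespace TannerAux

open SimpleGraph Sum

variable {N nv : ℕ} (P : Fin nv → Equiv.Perm (Fin N))

local notation "G" => tanner (∑ j, permMatrix (P j))
local notation "H" => tanner (H2mat P)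

lemma Csum_apply (i k : Fin N) :
    (∑ j, permMatrix (P j)) i k = ∑ j, (if P j i = k then 1 else 0) := by
  simp [permMatrix, Matrix.sum_apply]

lemma Csum_ne_zero (i k : Fin N) : (∑ j, permMatrix (P j)) i k ≠ 0 ↔ ∃ j, P j i = k := by
  rw [Csum_apply]
  simp [Finset.sum_eq_zero_iff, ← not_forall, ite_eq_right_iff,
    Finset.filter_eq_empty_iff, not_forall]

lemma G_adj {i k : Fin N} :
    (tanner (∑ j, permMatrix (P j))).Adj (inl i) (inr k) ↔ ∃ j, P j i = k := by
  rw [tanner_adj_inl_inr, Csum_ne_zero]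

lemma H2mat_le_one (p q) : H2mat P p q ≤ 1 := by
  unfold H2mat permMatrix
  dsimp
  split <;> split <;> simp

lemma H_adj0 {x k : Fin N} {j : Fin nv} :
    (tanner (H2mat P)).Adj (inl (0, x)) (inr (j, k)) ↔ x = k := by
  rw [tanner_adj_inl_inr]
  simp [H2mat]

lemma H_adj1 {x k : Fin N} {j : Fin nv} :
    (tanner (H2mat P)).Adj (inl (1, x)) (inr (j, k)) ↔ P j x = k := by
  rw [tanner_adj_inl_inr]
  simp [H2mat, permMatrix, Fin.one_eq_zero_iff]

lemma H_adj_cases {b : Fin 2} {x k : Fin N} {j : Fin nv}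
    (h : (tanner (H2mat P)).Adj (inl (b, x)) (inr (j, k))) :
    (b = 0 ∧ x = k) ∨ (b = 1 ∧ P j x = k) := by
  fin_cases b
  · exact Or.inl ⟨rfl, (H_adj0 P).1 h⟩
  · exact Or.inr ⟨rfl, (H_adj1 P).1 h⟩

end TannerAux

namespace TannerAux

open SimpleGraph Sum

lemma tanner_not_adj_ll {α β : Type*} {M : Matrix α β ℕ} (i i' : α) :
    ¬ (tanner M).Adj (inl i) (inl i') := by
  intro h
  rcases h.2 with ⟨_, _, _, h, _⟩ | ⟨_, _, _, h, _⟩ <;> simp at h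

lemma tanner_not_adj_rr {α β : Type*} {M : Matrix α β ℕ} (j j' : β) :
    ¬ (tanner M).Adj (inr j) (inr j') := by
  intro h
  rcases h.2 with ⟨_, _, h, _⟩ | ⟨_, _, h, _⟩ <;> simp at h

variable {N nv : ℕ} {P : Fin nv → Equiv.Perm (Fin N)}

/-- two distinct perms mapping i to k, from an entry ≥ 2 -/
lemma exists_two_of_two_le {i k : Fin N} (h : 2 ≤ (∑ j, permMatrix (P j)) i k) :
    ∃ j j', j ≠ j' ∧ P j i = k ∧ P j' i = k := by
  rw [Csum_apply] at h
  have h1 : (∑ j, (if P j i = k then 1 else 0)) ≠ 0 := by omega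
  obtain ⟨j, -, hj⟩ := Finset.exists_ne_zero_of_sum_ne_zero h1
  have hj' : P j i = k := by by_contra hc; simp [hc] at hj
  have h2 : (∑ j' ∈ Finset.univ \ {j}, (if P j' i = k then 1 else 0)) ≠ 0 := by
    have := Finset.sum_eq_sum_sdiff_singleton_add (Finset.mem_univ j)
      (fun j' => if P j' i = k then (1:ℕ) else 0)
    simp only [hj', if_pos] at this
    omega
  obtain ⟨j', hj'mem, hj'2⟩ := Finset.exists_ne_zero_of_sum_ne_zero h2
  have : P j' i = k := by by_contra hc; simp [hc] at hj'2
  refine ⟨j', j, ?_, this, hj'⟩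
  simp only [Finset.mem_sdiff, Finset.mem_singleton] at hj'mem
  exact hj'mem.2

/-- uniqueness of j from all entries ≤ 1 -/
lemma uniq_of_le_one (hC : ¬ ∃ i k, 2 ≤ (∑ j, permMatrix (P j)) i k)
    {i k : Fin N} {j j' : Fin nv} (h : P j i = k) (h' : P j' i = k) : j = j' := by
  by_contra hne
  apply hC
  refine ⟨i, k, ?_⟩
  rw [Csum_apply]
  have hsub : ({j, j'} : Finset (Fin nv)) ⊆ Finset.univ := Finset.subset_univ _
  have := Finset.sum_le_sum_of_subset (f := fun j'' => if P j'' i = k then (1:ℕ) else 0) hsub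
  rwa [Finset.sum_pair hne, if_pos h, if_pos h'] at this

end TannerAux

namespace TannerAux

open SimpleGraph Sum

variable {N nv : ℕ} (P : Fin nv → Equiv.Perm (Fin N))

/-- map from G-vertices to H-vertices -/
def fV : Fin N ⊕ Fin N → (Fin 2 × Fin N) ⊕ (Fin nv × Fin N)
  | inl i => inl (1, i)
  | inr k => inl (0, k)

lemma fV_inj : Function.Injective (fV (nv := nv) (N := N)) := by
  rintro (i | k) (i' | k') h <;> simp [fV, Fin.one_eq_zero_iff] at h <;> simp [h]

/-- midpoint column vertex for a G-edge -/
noncomputable def midp : ∀ {u v : Fin N ⊕ Fin N},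
    (tanner (∑ j, permMatrix (P j))).Adj u v → Fin nv × Fin N
  | inl i, inr k, h => (((G_adj P).1 h).choose, k)
  | inr k, inl i, h => (((G_adj P).1 h.symm).choose, k)
  | inl i, inl i', h => absurd h (tanner_not_adj_ll i i')
  | inr j, inr j', h => absurd h (tanner_not_adj_rr j j')

/-- the G-edge determined by a midpoint -/
def edgeOf (m : Fin nv × Fin N) : Sym2 (Fin N ⊕ Fin N) :=
  s(inl ((P m.1)⁻¹ m.2), inr m.2)

lemma midp_spec : ∀ {u v : Fin N ⊕ Fin N}
    (h : (tanner (∑ j, permMatrix (P j))).Adj u v), s(u, v) = edgeOf P (midp P h)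
  | inl i, inr k, h => by
    have hs : P (((G_adj P).1 h).choose) i = k := ((G_adj P).1 h).choose_spec
    have : ((P (((G_adj P).1 h).choose))⁻¹ : Equiv.Perm (Fin N)) k = i :=
      (Equiv.Perm.inv_eq_iff_eq).2 hs.symm
    simp [edgeOf, midp, this]
  | inr k, inl i, h => by
    have hs : P (((G_adj P).1 h.symm).choose) i = k := ((G_adj P).1 h.symm).choose_spec
    have : ((P (((G_adj P).1 h.symm).choose))⁻¹ : Equiv.Perm (Fin N)) k = i :=
      (Equiv.Perm.inv_eq_iff_eq).2 hs.symm
    simp [edgeOf, midp, this, Sym2.eq_swap]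
  | inl i, inl i', h => absurd h (tanner_not_adj_ll i i')
  | inr j, inr j', h => absurd h (tanner_not_adj_rr j j')

lemma liftAdj1 : ∀ {u v : Fin N ⊕ Fin N}
    (h : (tanner (∑ j, permMatrix (P j))).Adj u v),
    (tanner (H2mat P)).Adj (fV u) (inr (midp P h))
  | inl i, inr k, h => by
    have hs : P (((G_adj P).1 h).choose) i = k := ((G_adj P).1 h).choose_spec
    exact (H_adj1 P).2 hs
  | inr k, inl i, h => (H_adj0 P).2 rfl
  | inl i, inl i', h => absurd h (tanner_not_adj_ll i i')
  | inr j, inr j', h => absurd h (tanner_not_adj_rr j j')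

lemma liftAdj2 : ∀ {u v : Fin N ⊕ Fin N}
    (h : (tanner (∑ j, permMatrix (P j))).Adj u v),
    (tanner (H2mat P)).Adj (inr (midp P h)) (fV v)
  | inl i, inr k, h => ((H_adj0 P).2 rfl).symm
  | inr k, inl i, h => by
    have hs : P (((G_adj P).1 h.symm).choose) i = k := ((G_adj P).1 h.symm).choose_spec
    exact ((H_adj1 P).2 hs).symm
  | inl i, inl i', h => absurd h (tanner_not_adj_ll i i')
  | inr j, inr j', h => absurd h (tanner_not_adj_rr j j')

/-- lift a G-walk to an H-walk of twice the length -/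
noncomputable def lift : ∀ {u v : Fin N ⊕ Fin N},
    (tanner (∑ j, permMatrix (P j))).Walk u v → (tanner (H2mat P)).Walk (fV u) (fV v)
  | _, _, .nil => .nil
  | _, _, .cons h p => .cons (liftAdj1 P h) (.cons (liftAdj2 P h) (lift p))

@[simp] lemma lift_nil {u : Fin N ⊕ Fin N} :
    lift P (.nil : (tanner (∑ j, permMatrix (P j))).Walk u u) = .nil := rfl

@[simp] lemma lift_cons {u v w : Fin N ⊕ Fin N}
    (h : (tanner (∑ j, permMatrix (P j))).Adj u v)
    (p : (tanner (∑ j, permMatrix (P j))).Walk v w) :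
    lift P (.cons h p) = .cons (liftAdj1 P h) (.cons (liftAdj2 P h) (lift P p)) := rfl

lemma lift_length {u v} (w : (tanner (∑ j, permMatrix (P j))).Walk u v) :
    (lift P w).length = 2 * w.length := by
  induction w with
  | nil => rfl
  | cons h p ih => simp [ih]; ring

end TannerAux

namespace TannerAux

open SimpleGraph Sum

variable {N nv : ℕ} (P : Fin nv → Equiv.Perm (Fin N))

lemma fV_eq_inl (x : Fin N ⊕ Fin N) : ∃ z, fV (nv := nv) x = inl z := by
  cases x <;> exact ⟨_, rfl⟩

lemma fV_ne_inr (x : Fin N ⊕ Fin N) (m : Fin nv × Fin N) : fV x ≠ inr m := by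
  cases x <;> simp [fV]

lemma lift_mem_support_inl {u v} {w : (tanner (∑ j, permMatrix (P j))).Walk u v}
    {y : Fin 2 × Fin N} (hy : inl y ∈ (lift P w).support) :
    ∃ x ∈ w.support, fV (nv := nv) x = inl y := by
  induction w with
  | nil => simp only [lift_nil, Walk.support_nil, List.mem_singleton] at hy
           exact ⟨_, by simp, hy.symm⟩
  | cons h p ih =>
    simp only [lift_cons, Walk.support_cons, List.mem_cons] at hy
    rcases hy with hy | hy | hy
    · exact ⟨_, by simp, hy.symm⟩
    · exact absurd hy.symm (by simp)
    · obtain ⟨x, hx, hfx⟩ := ih hy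
      exact ⟨x, by simp [hx], hfx⟩

lemma lift_mem_support_inr {u v} {w : (tanner (∑ j, permMatrix (P j))).Walk u v}
    {m : Fin nv × Fin N} (hm : inr m ∈ (lift P w).support) :
    edgeOf P m ∈ w.edges := by
  induction w with
  | nil => simp only [lift_nil, Walk.support_nil, List.mem_singleton] at hm
           exact absurd hm.symm (fV_ne_inr _ _)
  | cons h p ih =>
    simp only [lift_cons, Walk.support_cons, List.mem_cons] at hm
    rcases hm with hm | hm | hm
    · exact absurd hm.symm (fV_ne_inr _ _)
    · obtain rfl : m = midp P h := by simpa using hm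
      simp [← midp_spec P h]
    · simp [ih hm]

lemma lift_mem_edges : ∀ {u v} (w : (tanner (∑ j, permMatrix (P j))).Walk u v) {e},
    e ∈ (lift P w).edges → ∃ m z, e = s(inr m, inl z) ∧ edgeOf P m ∈ w.edges
  | _, _, .nil, e, he => by simp at he
  | u, v, .cons (v := x) h p, e, he => by
    simp only [lift_cons, Walk.edges_cons, List.mem_cons] at he
    obtain ⟨zu, hzu⟩ := fV_eq_inl (nv := nv) u
    obtain ⟨zx, hzx⟩ := fV_eq_inl (nv := nv) x
    rcases he with he | he | he
    · exact ⟨midp P h, zu, by rw [he, hzu, Sym2.eq_swap], by simp [← midp_spec P h]⟩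
    · exact ⟨midp P h, zx, by rw [he, hzx], by simp [← midp_spec P h]⟩
    · obtain ⟨m, z, he', hm⟩ := lift_mem_edges p he
      exact ⟨m, z, he', by simp [hm]⟩

end TannerAux

namespace TannerAux

open SimpleGraph Sum

variable {N nv : ℕ} (P : Fin nv → Equiv.Perm (Fin N))

lemma lift_edges_nodup : ∀ {u v} (w : (tanner (∑ j, permMatrix (P j))).Walk u v),
    w.edges.Nodup → (lift P w).edges.Nodup
  | _, _, .nil, _ => by simp
  | u, v, .cons (v := x) h p, hn => by
    simp only [Walk.edges_cons, List.nodup_cons] at hn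
    obtain ⟨hne, hnp⟩ := hn
    simp only [lift_cons, Walk.edges_cons, List.nodup_cons, List.mem_cons]
    obtain ⟨zu, hzu⟩ := fV_eq_inl (nv := nv) u
    obtain ⟨zx, hzx⟩ := fV_eq_inl (nv := nv) x
    refine ⟨?_, ?_, lift_edges_nodup p hnp⟩
    · rintro (h1 | h1)
      · rw [hzu, hzx, Sym2.eq_iff] at h1
        rcases h1 with ⟨h1, -⟩ | ⟨h1, -⟩
        · simp at h1
        · exact h.ne (fV_inj (hzu.trans (h1.trans hzx.symm)))
      · obtain ⟨m, z, he', hm⟩ := lift_mem_edges P p h1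
        rw [hzu, Sym2.eq_iff] at he'
        rcases he' with ⟨h1, -⟩ | ⟨-, h2⟩
        · simp at h1
        · obtain rfl : midp P h = m := by simpa using h2
          exact hne (by rw [midp_spec P h]; exact hm)
    · intro h1
      obtain ⟨m, z, he', hm⟩ := lift_mem_edges P p h1
      rw [hzx, Sym2.eq_iff] at he'
      rcases he' with ⟨h1', -⟩ | ⟨-, h2⟩
      · obtain rfl : midp P h = m := by simpa using h1'
        exact hne (by rw [midp_spec P h]; exact hm)
      · simp at h2

lemma lift_support_nodup : ∀ {u v} (w : (tanner (∑ j, permMatrix (P j))).Walk u v),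
    w.support.Nodup → w.edges.Nodup → (lift P w).support.Nodup
  | _, _, .nil, _, _ => by simp
  | u, v, .cons (v := x) h p, hs, he => by
    simp only [Walk.support_cons, List.nodup_cons] at hs
    simp only [Walk.edges_cons, List.nodup_cons] at he
    simp only [lift_cons, Walk.support_cons, List.nodup_cons, List.mem_cons]
    obtain ⟨zu, hzu⟩ := fV_eq_inl (nv := nv) u
    refine ⟨?_, ?_, lift_support_nodup p hs.2 he.2⟩
    · rintro (h1 | h1)
      · exact fV_ne_inr u _ h1
      · rw [hzu] at h1
        obtain ⟨y, hy, hfy⟩ := lift_mem_support_inl P h1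
        have hyu : y = u := fV_inj (hfy.trans hzu.symm)
        exact hs.1 (hyu ▸ hy)
    · intro h1
      have := lift_mem_support_inr P h1
      exact he.1 (by rwa [← midp_spec P h] at this)

lemma lift_isCycle {a} {w : (tanner (∑ j, permMatrix (P j))).Walk a a}
    (hw : w.IsCycle) : (lift P w).IsCycle := by
  cases w with
  | nil => exact absurd rfl hw.ne_nil
  | cons h p =>
    rw [Walk.cons_isCycle_iff] at hw
    obtain ⟨hp, hep⟩ := hw
    rw [Walk.isCycle_def]
    refine ⟨⟨lift_edges_nodup P _ ?_⟩, by simp, ?_⟩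
    · simp only [Walk.edges_cons, List.nodup_cons]
      exact ⟨hep, hp.isTrail.edges_nodup⟩
    · simp only [lift_cons, Walk.support_cons, List.tail_cons, List.nodup_cons]
      constructor
      · intro h1
        have := lift_mem_support_inr P h1
        exact hep (by rwa [← midp_spec P h] at this)
      · exact lift_support_nodup P p hp.support_nodup hp.isTrail.edges_nodup

lemma egirth_le_twice :
    (tanner (H2mat P)).egirth ≤ 2 * (tanner (∑ j, permMatrix (P j))).egirth := by
  by_cases hGa : (tanner (∑ j, permMatrix (P j))).IsAcyclic
  · rw [hGa.egirth_eq_top, ENat.mul_top (by norm_num)]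
    exact le_top
  · obtain ⟨a, w, hw, hlen⟩ := SimpleGraph.exists_egirth_eq_length.2 hGa
    have h1 : (tanner (H2mat P)).egirth ≤ ((lift P w).length : ℕ∞) :=
      SimpleGraph.le_egirth.1 le_rfl _ _ (lift_isCycle P hw)
    rw [lift_length] at h1
    rw [hlen]
    refine h1.trans ?_
    push_cast
    rfl

end TannerAux

namespace TannerAux

open SimpleGraph Sum

variable {N nv : ℕ} (P : Fin nv → Equiv.Perm (Fin N))

/-- projection map from H-vertices to G-vertices -/
def gV : (Fin 2 × Fin N) ⊕ (Fin nv × Fin N) → Fin N ⊕ Fin N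
  | inl (b, x) => if b = 0 then inr x else inl x
  | inr (_, k) => inr k

@[simp] lemma gV_inl0 (x : Fin N) : gV (nv := nv) (inl (0, x)) = inr x := by simp [gV]

@[simp] lemma gV_inl1 (x : Fin N) : gV (nv := nv) (inl (1, x)) = inl x := by
  simp only [gV, if_neg (one_ne_zero : (1 : Fin 2) ≠ 0)]

@[simp] lemma gV_inr (m : Fin nv × Fin N) : gV (N := N) (inr m) = inr m.2 := by
  obtain ⟨j, k⟩ := m; rfl

lemma gV_injOn_left {y y' : Fin 2 × Fin N}
    (h : gV (nv := nv) (inl y) = gV (nv := nv) (inl y')) : y = y' := by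
  obtain ⟨b, x⟩ := y
  obtain ⟨b', x'⟩ := y'
  fin_cases b <;> fin_cases b' <;> simp_all

/-- the "junk-total" edge associated to an H-vertex -/
def mEdge : (Fin 2 × Fin N) ⊕ (Fin nv × Fin N) → Sym2 (Fin N ⊕ Fin N)
  | inl (_, x) => s(inl x, inl x)
  | inr m => edgeOf P m

@[simp] lemma mEdge_inr (m : Fin nv × Fin N) : mEdge P (inr m) = edgeOf P m := rfl

lemma projAdj {u x y : (Fin 2 × Fin N) ⊕ (Fin nv × Fin N)}
    (h : (tanner (H2mat P)).Adj u x) (h' : (tanner (H2mat P)).Adj x y)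
    (hne : u ≠ y) (hu : u.isLeft = true) (hy : y.isLeft = true) :
    (tanner (∑ j, permMatrix (P j))).Adj (gV u) (gV y) ∧
      s(gV u, gV y) = mEdge P x := by
  have hx : x.isLeft = false := by rw [tanner_isLeft h] at hu; simpa using hu
  obtain ⟨⟨b, z⟩, rfl⟩ := Sum.isLeft_iff.1 hu
  obtain ⟨⟨j, k⟩, rfl⟩ := Sum.isRight_iff.1 (by simpa using hx)
  obtain ⟨⟨b', z'⟩, rfl⟩ := Sum.isLeft_iff.1 hy
  rcases H_adj_cases P h with ⟨rfl, h1⟩ | ⟨rfl, h1⟩ <;>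
    rcases H_adj_cases P h'.symm with ⟨rfl, h2⟩ | ⟨rfl, h2⟩
  · exact absurd (by rw [h1, h2]) hne
  · have hz' : z' = (P j)⁻¹ k := (Equiv.Perm.eq_inv_iff_eq).2 h2
    subst h1
    refine ⟨?_, ?_⟩
    · simp only [gV_inl0, gV_inl1]
      exact ((G_adj P).2 ⟨j, h2⟩).symm
    · simp only [gV_inl0, gV_inl1, mEdge_inr, edgeOf, ← hz']
      exact Sym2.eq_swap
  · have hz : z = (P j)⁻¹ k := (Equiv.Perm.eq_inv_iff_eq).2 h1
    subst h2
    refine ⟨?_, ?_⟩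
    · simp only [gV_inl0, gV_inl1]
      exact (G_adj P).2 ⟨j, h1⟩
    · simp only [gV_inl0, gV_inl1, mEdge_inr, edgeOf, ← hz]
  · exact absurd (by rw [(P j).injective (h1.trans h2.symm)]) hne

end TannerAux

namespace TannerAux

open SimpleGraph Sum

variable {N nv : ℕ} (P : Fin nv → Equiv.Perm (Fin N))

lemma trail_ne {u x y v : (Fin 2 × Fin N) ⊕ (Fin nv × Fin N)}
    {h : (tanner (H2mat P)).Adj u x} {h' : (tanner (H2mat P)).Adj x y}
    {p : (tanner (H2mat P)).Walk y v}
    (ht : (Walk.cons h (Walk.cons h' p)).IsTrail) : u ≠ y := by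
  intro he
  subst he
  exact (List.nodup_cons.1 ht.edges_nodup).1 (by simp [Sym2.eq_swap])

lemma next_left {x y : (Fin 2 × Fin N) ⊕ (Fin nv × Fin N)}
    (hx : x.isLeft = false) (h' : (tanner (H2mat P)).Adj x y) : y.isLeft = true := by
  have := tanner_isLeft h'
  simp_all

lemma adj_left_right {u x : (Fin 2 × Fin N) ⊕ (Fin nv × Fin N)}
    (h : (tanner (H2mat P)).Adj u x) (hu : u.isLeft = true) : x.isLeft = false := by
  have := tanner_isLeft h
  simp_all

def proj : ∀ {u v}, (w : (tanner (H2mat P)).Walk u v) → w.IsTrail →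
    u.isLeft = true → v.isLeft = true →
    (tanner (∑ j, permMatrix (P j))).Walk (gV u) (gV v)
  | _, _, .nil, _, _, _ => .nil
  | _, _, .cons h .nil, _, hu, hv =>
      absurd (tanner_isLeft h) (by simp [hu, hv])
  | _, _, .cons (v := x) h (.cons (v := y) h' p), ht, hu, hv =>
      .cons (projAdj P h h' (trail_ne P ht) hu
          (next_left P (adj_left_right P h hu) h')).1
        (proj p ht.of_cons.of_cons (next_left P (adj_left_right P h hu) h') hv)

lemma proj_nil {u} (ht hu hv) :
    proj P (.nil : (tanner (H2mat P)).Walk u u) ht hu hv = .nil := rfl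

lemma proj_cons_cons {u x y v : (Fin 2 × Fin N) ⊕ (Fin nv × Fin N)}
    (h : (tanner (H2mat P)).Adj u x) (h' : (tanner (H2mat P)).Adj x y)
    (p : (tanner (H2mat P)).Walk y v) (ht hu hv) :
    proj P (.cons h (.cons h' p)) ht hu hv =
      .cons (projAdj P h h' (trail_ne P ht) hu
          (next_left P (adj_left_right P h hu) h')).1
        (proj P p ht.of_cons.of_cons (next_left P (adj_left_right P h hu) h') hv) := rfl

lemma proj_length : ∀ {u v} (w : (tanner (H2mat P)).Walk u v) (ht hu hv),
    2 * (proj P w ht hu hv).length = w.length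
  | _, _, .nil, _, _, _ => rfl
  | _, _, .cons h .nil, _, hu, hv => absurd (tanner_isLeft h) (by simp [hu, hv])
  | _, _, .cons h (.cons h' p), ht, hu, hv => by
    rw [proj_cons_cons]
    simp only [Walk.length_cons]
    rw [← proj_length p ht.of_cons.of_cons (next_left P (adj_left_right P h hu) h') hv]
    ring

lemma proj_support : ∀ {u v} (w : (tanner (H2mat P)).Walk u v) (ht hu hv),
    (proj P w ht hu hv).support = (w.support.filter (fun z => z.isLeft)).map gV
  | _, _, .nil, ht, hu, hv => by rw [proj_nil]; simp [hu]
  | _, _, .cons h .nil, _, hu, hv => absurd (tanner_isLeft h) (by simp [hu, hv])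
  | u, _, .cons h (.cons (v := y) h' p), ht, hu, hv => by
    rw [proj_cons_cons]
    have hx := adj_left_right P h hu
    simp only [Walk.support_cons, List.filter_cons, hu, hx, if_pos, List.map_cons]
    rw [proj_support p ht.of_cons.of_cons (next_left P hx h') hv]
    simp

lemma proj_edges : ∀ {u v} (w : (tanner (H2mat P)).Walk u v) (ht hu hv),
    (proj P w ht hu hv).edges = (w.support.filter (fun z => z.isRight)).map (mEdge P)
  | u, _, .nil, ht, hu, hv => by
    rw [proj_nil]
    have h1 : u.isRight = false := by simpa using hu
    simp [h1]
  | _, _, .cons h .nil, _, hu, hv => absurd (tanner_isLeft h) (by simp [hu, hv])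
  | u, _, .cons (v := x) h (.cons (v := y) h' p), ht, hu, hv => by
    rw [proj_cons_cons]
    have hx := adj_left_right P h hu
    have hxr : x.isRight = true := by simpa using hx
    simp only [Walk.edges_cons, Walk.support_cons, List.filter_cons]
    rw [proj_edges p ht.of_cons.of_cons (next_left P hx h') hv]
    have hur : u.isRight = false := by simpa using hu
    simp only [hur, hxr, if_pos, List.map_cons]
    rw [(projAdj P h h' (trail_ne P ht) hu (next_left P hx h')).2]
    simp

end TannerAux

namespace TannerAux

open SimpleGraph Sum

variable {N nv : ℕ} (P : Fin nv → Equiv.Perm (Fin N))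

lemma mEdge_injOn (hC : ¬ ∃ i k, 2 ≤ (∑ j, permMatrix (P j)) i k)
    {z z' : (Fin 2 × Fin N) ⊕ (Fin nv × Fin N)} (hz : z.isRight = true)
    (hz' : z'.isRight = true) (h : mEdge P z = mEdge P z') : z = z' := by
  obtain ⟨⟨j, k⟩, rfl⟩ := Sum.isRight_iff.1 hz
  obtain ⟨⟨j', k'⟩, rfl⟩ := Sum.isRight_iff.1 hz'
  simp only [mEdge_inr, edgeOf, Sym2.eq_iff] at h
  rcases h with ⟨h1, h2⟩ | ⟨h1, -⟩
  · simp only [inr.injEq] at h2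
    subst h2
    simp only [inl.injEq] at h1
    have hk : P j ((P j)⁻¹ k) = k := by simp
    have hk' : P j' ((P j)⁻¹ k) = k := by rw [h1]; simp
    rw [uniq_of_le_one hC hk hk']
  · simp at h1

lemma proj_isCycle (hC : ¬ ∃ i k, 2 ≤ (∑ j, permMatrix (P j)) i k)
    {a} (c : (tanner (H2mat P)).Walk a a) (hc : c.IsCycle) (ha : a.isLeft = true) :
    (proj P c hc.isTrail ha ha).IsCycle := by
  rw [Walk.isCycle_def]
  have hlen := proj_length P c hc.isTrail ha ha
  have h3 := hc.three_le_length
  have htail := (Walk.isCycle_def c).1 hc |>.2.2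
  refine ⟨⟨?_⟩, ?_, ?_⟩
  · rw [proj_edges]
    rw [c.support_eq_cons, List.filter_cons, if_neg (by simpa using ha)]
    refine List.Nodup.map_on ?_ (htail.filter _)
    intro x hx y hy hxy
    exact mEdge_injOn P hC (List.of_mem_filter hx) (List.of_mem_filter hy) hxy
  · intro hn
    rw [hn] at hlen
    simp at hlen
    omega
  · rw [proj_support]
    rw [c.support_eq_cons, List.filter_cons, if_pos (by simpa using ha), List.map_cons,
      List.tail_cons]
    refine List.Nodup.map_on ?_ (htail.filter _)
    intro x hx y hy hxy
    obtain ⟨x', rfl⟩ := Sum.isLeft_iff.1 (List.of_mem_filter hx)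
    obtain ⟨y', rfl⟩ := Sum.isLeft_iff.1 (List.of_mem_filter hy)
    rw [gV_injOn_left hxy]

lemma twice_le_egirth (hC : ¬ ∃ i k, 2 ≤ (∑ j, permMatrix (P j)) i k) :
    2 * (tanner (∑ j, permMatrix (P j))).egirth ≤ (tanner (H2mat P)).egirth := by
  by_cases hHa : (tanner (H2mat P)).IsAcyclic
  · rw [hHa.egirth_eq_top]
    exact le_top
  · obtain ⟨a, c, hc, hlen⟩ := SimpleGraph.exists_egirth_eq_length.2 hHa
    -- rotate the cycle so that it starts at a left vertex
    obtain ⟨b, hb, hbl⟩ : ∃ b ∈ c.support, b.isLeft = true := by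
      by_cases hal : a.isLeft = true
      · exact ⟨a, c.start_mem_support, hal⟩
      · cases c with
        | nil => exact absurd rfl hc.ne_nil
        | cons h p =>
          refine ⟨_, ?_, next_left P (by simpa using hal) h⟩
          simp [Walk.support_cons, p.start_mem_support]
    set c' := c.rotate b hb with hc'
    have hcyc' : c'.IsCycle := hc.rotate hb
    have hlen' : c'.length = c.length := by
      rw [← Walk.length_edges, ← Walk.length_edges]
      exact (c.rotate_edges b hb).perm.length_eq
    have hq := proj_isCycle P hC c' hcyc' hbl
    have h1 : (tanner (∑ j, permMatrix (P j))).egirth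
        ≤ ((proj P c' hcyc'.isTrail hbl hbl).length : ℕ∞) :=
      SimpleGraph.le_egirth.1 le_rfl _ _ hq
    have h2 := proj_length P c' hcyc'.isTrail hbl hbl
    calc 2 * (tanner (∑ j, permMatrix (P j))).egirth
        ≤ 2 * ((proj P c' hcyc'.isTrail hbl hbl).length : ℕ∞) := by
          exact mul_le_mul_right h1 2
      _ = ((c.length : ℕ) : ℕ∞) := by
          rw [← hlen', ← h2]; push_cast; ring
      _ = (tanner (H2mat P)).egirth := hlen.symm

end TannerAux

namespace TannerAux

open SimpleGraph Sum

variable {N nv : ℕ} (P : Fin nv → Equiv.Perm (Fin N))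

lemma egirth_eq_four (hC : ∃ i k, 2 ≤ (∑ j, permMatrix (P j)) i k) :
    (tanner (H2mat P)).egirth = 4 := by
  obtain ⟨i, k, hik⟩ := hC
  obtain ⟨j, j', hne, hj, hj'⟩ := exists_two_of_two_le hik
  -- the 4-cycle
  have h1 : (tanner (H2mat P)).Adj (inl (0, k)) (inr (j, k)) := (H_adj0 P).2 rfl
  have h2 : (tanner (H2mat P)).Adj (inr (j, k)) (inl (1, i)) := ((H_adj1 P).2 hj).symm
  have h3 : (tanner (H2mat P)).Adj (inl (1, i)) (inr (j', k)) := (H_adj1 P).2 hj'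
  have h4 : (tanner (H2mat P)).Adj (inr (j', k)) (inl (0, k)) := ((H_adj0 P).2 rfl).symm
  set w : (tanner (H2mat P)).Walk (inl (0, k)) (inl (0, k)) :=
    .cons h1 (.cons h2 (.cons h3 (.cons h4 .nil))) with hw
  have hcyc : w.IsCycle := by
    rw [Walk.isCycle_def]
    refine ⟨⟨?_⟩, by simp [hw], ?_⟩
    · simp [hw, Sym2.eq_iff, Prod.ext_iff, hne, hne.symm,
        (by norm_num : (0 : Fin 2) ≠ 1)]
    · simp [hw, Prod.ext_iff, hne, hne.symm, (by norm_num : (0 : Fin 2) ≠ 1),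
        (by norm_num : (1 : Fin 2) ≠ 0)]
  have hle : (tanner (H2mat P)).egirth ≤ 4 := by
    have := SimpleGraph.le_egirth.1 (le_refl (tanner (H2mat P)).egirth) _ _ hcyc
    simpa [hw] using this
  have hna : ¬ (tanner (H2mat P)).IsAcyclic := fun h => h _ hcyc
  obtain ⟨a, c, hc, hlen⟩ := SimpleGraph.exists_egirth_eq_length.2 hna
  rw [hlen]
  rw [hlen] at hle
  have h3l := hc.three_le_length
  have heven := tanner_closed_even c
  obtain ⟨r, hr⟩ := heven
  have hle' : c.length ≤ 4 := by exact_mod_cast hle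
  have : c.length = 4 := by omega
  rw [this]
  rfl

end TannerAux

open TannerAux in
theorem stmt6 {N nv : ℕ} (P : Fin nv → Equiv.Perm (Fin N)) :
    matGirth (H2mat P) = 2 * matGirth (∑ j, permMatrix (P j)) := by
  have hH2 : ¬ ∃ p q, 2 ≤ H2mat P p q := by
    rintro ⟨p, q, h⟩
    have := H2mat_le_one P p q
    omega
  by_cases hC : ∃ i j, 2 ≤ (∑ j, permMatrix (P j)) i j
  · rw [matGirth, if_neg hH2, matGirth, if_pos hC]
    rw [egirth_eq_four P hC]
    rfl
  · rw [matGirth, if_neg hH2, matGirth, if_neg hC]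
    exact le_antisymm (egirth_le_twice P) (twice_le_egirth P hC)
end

section
/- Let H₃ be the 3N × n_v·N matrix with block rows [1, …, 1], [x^{i₁}, …, x^{i_{n_v}}], [x^{j₁}, …, x^{j_{n_v}}] of N × N circulant permutation matrices with i₁ = j₁ = 0. Then girth(H₃) > 4 if and only if each of the three sets {i₁, …, i_{n_v}}, {j₁, …, j_{n_v}}, {i₁ − j₁, …, i_{n_v} − j_{n_v}} consists of pairwise distinct residues modulo N. -/
open Matrix

/-- The `N × N` circulant permutation matrix with shift `r` (mod `N`):
entry `(i, j)` equals `1` iff `j ≡ i + r (mod N)`. -/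
def circ (N : ℕ) (r : ZMod N) : Matrix (Fin N) (Fin N) ℕ :=
  Matrix.of fun i j => if ((j : ℕ) : ZMod N) = ((i : ℕ) : ZMod N) + r then 1 else 0

/-- The block matrix with first block row all identities, second block row the circulants
`circ N (e j)` and third block row the circulants `circ N (f j)`. -/
def H3circ {N nv : ℕ} (e f : Fin nv → ZMod N) :
    Matrix (Fin 3 × Fin N) (Fin nv × Fin N) ℕ :=
  Matrix.of fun p q =>
    if p.1 = 0 then (if p.2 = q.2 then 1 else 0)
    else if p.1 = 1 then circ N (e q.1) p.2 q.2
    else circ N (f q.1) p.2 q.2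

/-! ### Auxiliary material -/

section TannerAux

variable {α β : Type*}

/-- A "bad quadruple": two distinct rows sharing two distinct common columns,
equivalently a 4-cycle in the Tanner graph. -/
def Bad (M : Matrix α β ℕ) : Prop :=
  ∃ i i' j j', i ≠ i' ∧ j ≠ j' ∧ M i j ≠ 0 ∧ M i j' ≠ 0 ∧ M i' j ≠ 0 ∧ M i' j' ≠ 0

lemma tanner_adj {M : Matrix α β ℕ} {u v : α ⊕ β} :
    (tanner M).Adj u v ↔
      ∃ i j, M i j ≠ 0 ∧ ((u = .inl i ∧ v = .inr j) ∨ (u = .inr j ∧ v = .inl i)) := by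
  constructor
  · rintro ⟨hne, h | h⟩
    · obtain ⟨i, j, rfl, rfl, h⟩ := h; exact ⟨i, j, h, Or.inl ⟨rfl, rfl⟩⟩
    · obtain ⟨i, j, rfl, rfl, h⟩ := h; exact ⟨i, j, h, Or.inr ⟨rfl, rfl⟩⟩
  · rintro ⟨i, j, h, ⟨rfl, rfl⟩ | ⟨rfl, rfl⟩⟩
    · exact ⟨by simp, Or.inl ⟨i, j, rfl, rfl, h⟩⟩
    · exact ⟨by simp, Or.inr ⟨i, j, rfl, rfl, h⟩⟩

lemma tanner_parity {M : Matrix α β ℕ} {u v : α ⊕ β} (w : (tanner M).Walk u v) :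
    Even w.length ↔ (u.isLeft = v.isLeft) := by
  induction w with
  | nil => simp
  | @cons a b c h p ih =>
    obtain ⟨i, j, _, ⟨rfl, rfl⟩ | ⟨rfl, rfl⟩⟩ := tanner_adj.mp h <;>
      rcases c with x | x <;> simp_all [Nat.even_add_one]

lemma walk_cons_of_len {V : Type*} {G : SimpleGraph V} {u v : V} (w : G.Walk u v) {n : ℕ}
    (h : w.length = n + 1) :
    ∃ (b : V) (hadj : G.Adj u b) (p : G.Walk b v),
      w = SimpleGraph.Walk.cons hadj p ∧ p.length = n := by
  cases w with
  | nil => simp at h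
  | cons hadj p => exact ⟨_, hadj, p, rfl, by simpa using h⟩

lemma four_lt_egirth_iff (M : Matrix α β ℕ) :
    4 < (tanner M).egirth ↔ ¬ Bad M := by
  constructor
  · intro hlt hbad
    obtain ⟨i, i', j, j', hii, hjj, h1, h2, h3, h4⟩ := hbad
    have hab : (tanner M).Adj (.inl i) (.inr j) := tanner_adj.mpr ⟨i, j, h1, Or.inl ⟨rfl, rfl⟩⟩
    have hbc : (tanner M).Adj (.inr j) (.inl i') := tanner_adj.mpr ⟨i', j, h3, Or.inr ⟨rfl, rfl⟩⟩
    have hcd : (tanner M).Adj (.inl i') (.inr j') := tanner_adj.mpr ⟨i', j', h4, Or.inl ⟨rfl, rfl⟩⟩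
    have hda : (tanner M).Adj (.inr j') (.inl i) := tanner_adj.mpr ⟨i, j', h2, Or.inr ⟨rfl, rfl⟩⟩
    set w : (tanner M).Walk (.inl i) (.inl i) :=
      .cons hab (.cons hbc (.cons hcd (.cons hda .nil))) with hw
    have hc : w.IsCycle := by
      rw [SimpleGraph.Walk.isCycle_def, SimpleGraph.Walk.isTrail_def]
      refine ⟨?_, by simp [hw], ?_⟩
      · simp [hw, Sym2.eq_iff]
        tauto
      · simp [hw]
        tauto
    have hle : (tanner M).egirth ≤ w.length := SimpleGraph.le_egirth.mp le_rfl _ w hc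
    have : (tanner M).egirth ≤ 4 := by simpa [hw] using hle
    exact absurd hlt (not_lt.mpr this)
  · intro hbad
    have h5 : (5 : ℕ∞) ≤ (tanner M).egirth := by
      rw [SimpleGraph.le_egirth]
      intro a w hcy
      by_contra hcon
      push_neg at hcon
      have hlt5 : w.length < 5 := by exact_mod_cast hcon
      have h3 := hcy.three_le_length
      obtain ⟨r, hr⟩ := (tanner_parity w).mpr rfl
      have hlen4 : w.length = 4 := by omega
      obtain ⟨b, hab, p1, rfl, hl1⟩ := walk_cons_of_len w hlen4
      obtain ⟨c, hbc, p2, rfl, hl2⟩ := walk_cons_of_len p1 hl1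
      obtain ⟨d, hcd, p3, rfl, hl3⟩ := walk_cons_of_len p2 hl2
      obtain ⟨a', hda, p4, rfl, hl4⟩ := walk_cons_of_len p3 hl3
      obtain rfl : a' = a := SimpleGraph.Walk.eq_of_length_eq_zero hl4
      have hnil : p4 = SimpleGraph.Walk.nil :=
        (SimpleGraph.Walk.nil_iff_eq_nil).mp (SimpleGraph.Walk.nil_iff_length_eq.mpr hl4)
      subst hnil
      have hnd := hcy.2
      simp only [SimpleGraph.Walk.support_cons, SimpleGraph.Walk.support_nil, List.tail_cons,
        List.nodup_cons, List.mem_cons, List.mem_singleton, List.not_mem_nil] at hnd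
      apply hbad
      obtain ⟨i, j, hM1, ⟨rfl, rfl⟩ | ⟨rfl, rfl⟩⟩ := tanner_adj.mp hab
      · -- a = inl i, b = inr j
        obtain ⟨i2, j1, hM2, ⟨h, _⟩ | ⟨h1, rfl⟩⟩ := tanner_adj.mp hbc
        · exact absurd h (by simp)
        obtain rfl : j = j1 := by simpa using h1
        -- c = inl i2
        obtain ⟨i2', j2, hM3, ⟨h2, rfl⟩ | ⟨h2, _⟩⟩ := tanner_adj.mp hcd
        · obtain rfl : i2' = i2 := by simpa using h2.symm
          -- d = inr j2
          obtain ⟨i3, j2', hM4, ⟨h5, h6⟩ | ⟨h5, h6⟩⟩ := tanner_adj.mp hda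
          · exact absurd h5 (by simp)
          obtain rfl : j2' = j2 := by simpa using h5.symm
          obtain rfl : i3 = i := by simpa using h6.symm
          refine ⟨_, _, _, _, ?_, ?_, hM1, hM4, hM2, hM3⟩ <;> (rintro rfl; simp at hnd)
        · exact absurd h2 (by simp)
      · -- a = inr j, b = inl i
        obtain ⟨i1, j2, hM2, ⟨h1, rfl⟩ | ⟨h1, _⟩⟩ := tanner_adj.mp hbc
        · obtain rfl : i1 = i := by simpa using h1.symm
          -- c = inr j2
          obtain ⟨i2, j2', hM3, ⟨h2, h3'⟩ | ⟨h2, rfl⟩⟩ := tanner_adj.mp hcd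
          · exact absurd h2 (by simp)
          obtain rfl : j2' = j2 := by simpa using h2.symm
          -- d = inl i2
          obtain ⟨i2', j', hM4, ⟨h5, h6⟩ | ⟨h5, h6⟩⟩ := tanner_adj.mp hda
          · obtain rfl : i2' = i2 := by simpa using h5.symm
            obtain rfl : j' = j := by simpa using h6.symm
            refine ⟨_, _, _, _, ?_, ?_, hM1, hM2, hM4, hM3⟩ <;> (rintro rfl; simp at hnd)
          · exact absurd h6 (by simp)
        · exact absurd h1 (by simp)
    exact lt_of_lt_of_le (by norm_num) h5

end TannerAux

/-- The shift attached to block row `a` and block column `k`. -/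
def sh {N nv : ℕ} (e f : Fin nv → ZMod N) (a : Fin 3) (k : Fin nv) : ZMod N :=
  if a = 0 then 0 else if a = 1 then e k else f k

lemma castFin_inj {N : ℕ} {x y : Fin N} :
    ((x : ℕ) : ZMod N) = ((y : ℕ) : ZMod N) ↔ x = y := by
  constructor
  · intro h
    have := congrArg ZMod.val h
    rw [ZMod.val_cast_of_lt x.2, ZMod.val_cast_of_lt y.2] at this
    exact Fin.ext this
  · rintro rfl; rfl

lemma H3circ_ne_zero {N nv : ℕ} (e f : Fin nv → ZMod N) (p : Fin 3 × Fin N)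
    (q : Fin nv × Fin N) :
    H3circ e f p q ≠ 0 ↔ ((q.2 : ℕ) : ZMod N) = ((p.2 : ℕ) : ZMod N) + sh e f p.1 q.1 := by
  rcases p with ⟨a, x⟩; rcases q with ⟨k, y⟩
  fin_cases a <;> simp [H3circ, circ, sh, castFin_inj, eq_comm] <;>
    (constructor
     · intro h; by_contra hc; simp [hc] at h
     · intro h; simp [h])

lemma bad_iff {N nv : ℕ} [NeZero N] (e f : Fin nv → ZMod N) :
    Bad (H3circ e f) ↔ ∃ a b k1 k2, a ≠ b ∧ k1 ≠ k2 ∧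
      sh e f a k1 - sh e f b k1 = sh e f a k2 - sh e f b k2 := by
  constructor
  · rintro ⟨p1, p2, q1, q2, hp, hq, h1, h2, h3, h4⟩
    rw [H3circ_ne_zero] at h1 h2 h3 h4
    refine ⟨p1.1, p2.1, q1.1, q2.1, ?_, ?_, ?_⟩
    · rintro hab
      apply hp
      rw [hab] at h1
      have := h1.symm.trans h3
      have hx : ((p1.2 : ℕ) : ZMod N) = ((p2.2 : ℕ) : ZMod N) := by
        exact add_right_cancel this
      exact Prod.ext hab (castFin_inj.mp hx)
    · rintro hk
      apply hq
      rw [hk] at h1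
      have := h2.trans h1.symm
      exact Prod.ext hk (castFin_inj.mp this).symm
    · linear_combination h3 - h1 + h2 - h4
  · rintro ⟨a, b, k1, k2, hab, hk, heq⟩
    refine ⟨(a, ⟨(0 - sh e f a k1 : ZMod N).val, ZMod.val_lt _⟩),
            (b, ⟨(0 - sh e f b k1 : ZMod N).val, ZMod.val_lt _⟩),
            (k1, ⟨(0 : ZMod N).val, ZMod.val_lt _⟩),
            (k2, ⟨(sh e f a k2 - sh e f a k1 : ZMod N).val, ZMod.val_lt _⟩),
            fun h => hab (congrArg Prod.fst h), fun h => hk (congrArg Prod.fst h),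
            ?_, ?_, ?_, ?_⟩ <;>
      · rw [H3circ_ne_zero]
        simp only [Fin.val_mk, ZMod.natCast_rightInverse _]
        first
        | ring1
        | linear_combination -heq

lemma sh_exists_iff {N nv : ℕ} (e f : Fin nv → ZMod N) :
    (∃ a b k1 k2, a ≠ b ∧ k1 ≠ k2 ∧
        sh e f a k1 - sh e f b k1 = sh e f a k2 - sh e f b k2) ↔
      ¬ (Function.Injective e ∧ Function.Injective f ∧
          Function.Injective (fun k => e k - f k)) := by
  constructor
  · rintro ⟨a, b, k1, k2, hab, hk, heq⟩ ⟨he, hf, hef⟩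
    fin_cases a <;> fin_cases b <;> simp [sh, Fin.ext_iff] at heq hab <;>
      first
      | exact hk (he (by linear_combination heq))
      | exact hk (hf (by linear_combination heq))
      | exact hk (hef (by linear_combination heq))
      | exact hk (he (by linear_combination -heq))
      | exact hk (hf (by linear_combination -heq))
      | exact hk (hef (by linear_combination -heq))
  · intro h
    rw [not_and_or, not_and_or] at h
    rcases h with h | h | h
    · obtain ⟨k1, k2, heq, hk⟩ := Function.not_injective_iff.mp h
      exact ⟨1, 0, k1, k2, by decide, hk, by simp [sh, heq]⟩
    · obtain ⟨k1, k2, heq, hk⟩ := Function.not_injective_iff.mp h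
      exact ⟨2, 0, k1, k2, by decide, hk, by simp [sh, heq]⟩
    · obtain ⟨k1, k2, heq, hk⟩ := Function.not_injective_iff.mp h
      refine ⟨1, 2, k1, k2, by decide, hk, ?_⟩
      simp only [sh, show ((1 : Fin 3) = 0) = False by simp,
        show ((2 : Fin 3) = 0) = False by simp, show ((1 : Fin 3) = 1) = True by simp,
        show ((2 : Fin 3) = 1) = False by simp, if_true, if_false]
      simpa using heq

theorem stmt11 {N nv : ℕ} (hN : 0 < N) [NeZero nv] (e f : Fin nv → ZMod N)
    (h0e : e 0 = 0) (h0f : f 0 = 0) :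
    (4 : ℕ∞) < (tanner (H3circ e f)).egirth ↔
      Function.Injective e ∧ Function.Injective f ∧
        Function.Injective (fun k => e k - f k) := by
  haveI : NeZero N := ⟨hN.ne'⟩
  rw [four_lt_egirth_iff, bad_iff, sh_exists_iff, not_not]
end

section
/- Let H be an n_cN × n_vN block matrix of N × N permutation matrices P_{ij}. Then the Tanner graph of H has girth greater than 4 if and only if for all i ≠ j in [n_c], every entry of the matrix C_{ij} = Σ_{k=1}^{n_v} P_{ik} P_{jk}ᵀ (computed over ℕ) is at most 1. -/
open Matrix

/-- The block matrix whose `(i, j)` block is the permutation matrix of `σ i j`. -/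
def Hperm {N nc nv : ℕ} (σ : Fin nc → Fin nv → Equiv.Perm (Fin N)) :
    Matrix (Fin nc × Fin N) (Fin nv × Fin N) ℕ :=
  Matrix.of fun p q => permMatrix (σ p.1 q.1) p.2 q.2

section lemmas
variable {α β : Type*} {M : Matrix α β ℕ}

lemma adj_inl_inr {i : α} {j : β} : (tanner M).Adj (Sum.inl i) (Sum.inr j) ↔ M i j ≠ 0 := by
  simp [tanner, SimpleGraph.fromRel_adj]

lemma not_adj_inl_inl {i i' : α} : ¬ (tanner M).Adj (Sum.inl i) (Sum.inl i') := by
  simp [tanner, SimpleGraph.fromRel_adj]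

lemma not_adj_inr_inr {j j' : β} : ¬ (tanner M).Adj (Sum.inr j) (Sum.inr j') := by
  simp [tanner, SimpleGraph.fromRel_adj]

lemma adj_isLeft {u v : α ⊕ β} (h : (tanner M).Adj u v) : u.isLeft = !v.isLeft := by
  cases u <;> cases v <;> simp_all [not_adj_inl_inl, not_adj_inr_inr]

end lemmas

lemma hperm_ne {N nc nv : ℕ} (σ : Fin nc → Fin nv → Equiv.Perm (Fin N))
    {i : Fin nc} {a : Fin N} {k : Fin nv} {c : Fin N} :
    Hperm σ (i, a) (k, c) ≠ 0 ↔ σ i k a = c := by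
  simp [Hperm, permMatrix]

lemma sum_entry {N nc nv : ℕ} (σ : Fin nc → Fin nv → Equiv.Perm (Fin N))
    (i j : Fin nc) (a b : Fin N) :
    (∑ k, permMatrix (σ i k) * (permMatrix (σ j k))ᵀ) a b
      = ∑ k : Fin nv, if σ i k a = σ j k b then 1 else 0 := by
  rw [Matrix.sum_apply]
  refine Finset.sum_congr rfl fun k _ => ?_
  simp only [Matrix.mul_apply, Matrix.transpose_apply, permMatrix, Matrix.of_apply]
  rw [Finset.sum_eq_single (σ i k a)]
  · by_cases h : σ i k a = σ j k b <;> simp [h, eq_comm]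
  · intro c _ hc; simp [Ne.symm hc]
  · simp

lemma le_one_iff {N nc nv : ℕ} (σ : Fin nc → Fin nv → Equiv.Perm (Fin N))
    (i j : Fin nc) (a b : Fin N) :
    (∑ k, permMatrix (σ i k) * (permMatrix (σ j k))ᵀ) a b ≤ 1 ↔
      ∀ k k' : Fin nv, σ i k a = σ j k b → σ i k' a = σ j k' b → k = k' := by
  rw [sum_entry, ← Finset.card_filter, Finset.card_le_one]
  simp only [Finset.mem_filter, Finset.mem_univ, true_and]
  exact ⟨fun h k k' h1 h2 => h k h1 k' h2, fun h k h1 k' h2 => h k k' h1 h2⟩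

theorem stmt15 {N nc nv : ℕ} (σ : Fin nc → Fin nv → Equiv.Perm (Fin N)) :
    (4 : ℕ∞) < (tanner (Hperm σ)).egirth ↔
      ∀ i j : Fin nc, i ≠ j → ∀ a b : Fin N,
        (∑ k, permMatrix (σ i k) * (permMatrix (σ j k))ᵀ) a b ≤ 1 := by
  constructor
  · intro hg i j hij a b
    rw [le_one_iff]
    by_contra hcon
    push_neg at hcon
    obtain ⟨k, k', hk, hk', hkk'⟩ := hcon
    have h01 : (tanner (Hperm σ)).Adj (Sum.inl (i,a)) (Sum.inr (k, σ i k a)) :=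
      adj_inl_inr.mpr ((hperm_ne σ).mpr rfl)
    have h12 : (tanner (Hperm σ)).Adj (Sum.inr (k, σ i k a)) (Sum.inl (j,b)) :=
      (adj_inl_inr.mpr ((hperm_ne σ).mpr hk.symm)).symm
    have h23 : (tanner (Hperm σ)).Adj (Sum.inl (j,b)) (Sum.inr (k', σ i k' a)) :=
      adj_inl_inr.mpr ((hperm_ne σ).mpr hk'.symm)
    have h30 : (tanner (Hperm σ)).Adj (Sum.inr (k', σ i k' a)) (Sum.inl (i,a)) :=
      (adj_inl_inr.mpr ((hperm_ne σ).mpr rfl)).symm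
    set w : (tanner (Hperm σ)).Walk (Sum.inl (i,a)) (Sum.inl (i,a)) :=
      SimpleGraph.Walk.cons h01 (SimpleGraph.Walk.cons h12
        (SimpleGraph.Walk.cons h23 (SimpleGraph.Walk.cons h30 SimpleGraph.Walk.nil))) with hw
    have hcyc : w.IsCycle := by
      rw [SimpleGraph.Walk.isCycle_def]
      refine ⟨?_, by simp [hw], ?_⟩
      · rw [SimpleGraph.Walk.isTrail_def]
        simp only [hw, SimpleGraph.Walk.edges_cons, SimpleGraph.Walk.edges_nil]
        simp [Sym2.eq_iff, Prod.ext_iff]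
        tauto
      · simp only [hw, SimpleGraph.Walk.support_cons, SimpleGraph.Walk.support_nil]
        simp [Prod.ext_iff]
        tauto
    have hle : (tanner (Hperm σ)).egirth ≤ (w.length : ℕ∞) :=
      SimpleGraph.le_egirth.mp le_rfl _ w hcyc
    have : w.length = 4 := by simp [hw]
    rw [this] at hle
    exact absurd hg (not_lt.mpr hle)
  · intro h
    have h5 : (5 : ℕ∞) ≤ (tanner (Hperm σ)).egirth := by
      rw [SimpleGraph.le_egirth]
      intro u w hw
      have h3 := hw.three_le_length
      have hn3 : w.length ≠ 3 := by
        intro hlen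
        rcases w with _ | ⟨h₁, _ | ⟨h₂, _ | ⟨h₃, _ | ⟨h₄, p⟩⟩⟩⟩ <;>
          simp_all [SimpleGraph.Walk.length_cons]
        have e1 := adj_isLeft h₁
        have e2 := adj_isLeft h₂
        have e3 := adj_isLeft h₃
        rename_i v1 v2
        cases u <;> cases v1 <;> cases v2 <;> simp_all
      have hn4 : w.length ≠ 4 := by
        intro hlen
        rcases w with _ | ⟨h₁, _ | ⟨h₂, _ | ⟨h₃, _ | ⟨h₄, _ | ⟨h₅, p⟩⟩⟩⟩⟩ <;>
          simp_all [SimpleGraph.Walk.length_cons]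
        rename_i x y z
        obtain ⟨-, -, hnd⟩ := (SimpleGraph.Walk.isCycle_def _).mp hw
        simp only [SimpleGraph.Walk.support_cons, SimpleGraph.Walk.support_nil,
          List.tail_cons, List.nodup_cons, List.mem_cons, List.not_mem_nil,
          List.mem_singleton, List.nodup_nil, or_false, not_or] at hnd
        obtain ⟨⟨hxy, hxz, hxu⟩, ⟨hyz, hyu⟩, hzu, -⟩ := hnd
        rcases u with ⟨i, a⟩ | ⟨k, c⟩
        · rcases x with p | ⟨k, c⟩
          · exact not_adj_inl_inl h₁
          rcases y with ⟨j, b'⟩ | q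
          · rcases z with p | ⟨k', c'⟩
            · exact not_adj_inl_inl h₃
            have e1 : σ i k a = c := (hperm_ne σ).mp (adj_inl_inr.mp h₁)
            have e2 : σ j k b' = c := (hperm_ne σ).mp (adj_inl_inr.mp h₂.symm)
            have e3 : σ j k' b' = c' := (hperm_ne σ).mp (adj_inl_inr.mp h₃)
            have e4 : σ i k' a = c' := (hperm_ne σ).mp (adj_inl_inr.mp h₄.symm)
            have hij : i ≠ j := by
              rintro rfl
              exact hyu (by rw [(σ i k).injective (e2.trans e1.symm)])
            have hkk' : k ≠ k' := by
              rintro rfl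
              exact hxz (by rw [← e1, ← e4])
            exact hkk' ((le_one_iff σ i j a b').mp (h i j hij a b') k k'
              (e1.trans e2.symm) (e4.trans e3.symm))
          · exact not_adj_inr_inr h₂
        · rcases x with ⟨i, a⟩ | q
          · rcases y with p | ⟨k2, c2⟩
            · exact not_adj_inl_inl h₂
            rcases z with ⟨j, b2⟩ | q
            · have e1 : σ i k a = c := (hperm_ne σ).mp (adj_inl_inr.mp h₁.symm)
              have e2 : σ i k2 a = c2 := (hperm_ne σ).mp (adj_inl_inr.mp h₂)
              have e3 : σ j k2 b2 = c2 := (hperm_ne σ).mp (adj_inl_inr.mp h₃.symm)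
              have e4 : σ j k b2 = c := (hperm_ne σ).mp (adj_inl_inr.mp h₄)
              have hij : i ≠ j := by
                rintro rfl
                exact hxz (by rw [(σ i k).injective (e4.trans e1.symm)])
              have hkk2 : k ≠ k2 := by
                rintro rfl
                exact hyu (by rw [← e1, ← e2])
              exact hkk2 ((le_one_iff σ i j a b2).mp (h i j hij a b2) k k2
                (e1.trans e4.symm) (e2.trans e3.symm))
            · exact not_adj_inr_inr h₃
          · exact not_adj_inr_inr h₁
      have : 5 ≤ w.length := by omega
      exact_mod_cast this
    exact lt_of_lt_of_le (by norm_num) h5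
end

section
/- Let H be an n_cN × n_vN block matrix of N × N permutation matrices, with C_{ij} = Σ_{k=1}^{n_v} P_{ik} P_{jk}ᵀ for i ≠ j. If the Tanner graph of H has girth greater than 2m (m ≥ 2), then for all 1 ≤ i < j ≤ n_c, the Tanner graph of the matrix C_{ij} has girth greater than m. -/
open Matrix

namespace Stmt17Aux

open SimpleGraph

variable {N nc nv : ℕ} (σ : Fin nc → Fin nv → Equiv.Perm (Fin N)) (i j : Fin nc)

/-- The inter-block-row matrix. -/
abbrev Cmat : Matrix (Fin N) (Fin N) ℕ :=
  ∑ k, permMatrix (σ i k) * (permMatrix (σ j k))ᵀ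

lemma Cmat_apply (a b : Fin N) :
    Cmat σ i j a b = (Finset.univ.filter fun k => σ i k a = σ j k b).card := by
  rw [Finset.card_filter]
  simp only [Matrix.sum_apply, Matrix.mul_apply, Matrix.transpose_apply, permMatrix,
    Matrix.of_apply]
  refine Finset.sum_congr rfl fun k _ => ?_
  simp [boole_mul, Finset.sum_ite_eq, eq_comm]

lemma Cmat_ne_zero_iff {a b : Fin N} :
    Cmat σ i j a b ≠ 0 ↔ ∃ k, σ i k a = σ j k b := by
  rw [Cmat_apply, ← Nat.pos_iff_ne_zero, Finset.card_pos, Finset.filter_nonempty_iff]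
  simp

lemma two_le_Cmat_iff {a b : Fin N} :
    2 ≤ Cmat σ i j a b ↔
      ∃ k k', k ≠ k' ∧ σ i k a = σ j k b ∧ σ i k' a = σ j k' b := by
  rw [Cmat_apply]
  have hiff := Finset.one_lt_card
    (s := Finset.univ.filter fun k => σ i k a = σ j k b)
  constructor
  · intro h2
    obtain ⟨k, hk, k', hk', hne⟩ := hiff.mp (by omega)
    simp only [Finset.mem_filter] at hk hk'
    exact ⟨k, k', hne, hk.2, hk'.2⟩
  · rintro ⟨k, k', hne, h1, h2⟩
    have := hiff.mpr ⟨k, by simp [h1], k', by simp [h2], hne⟩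
    omega

/-- Adjacency in the Tanner graph of `Hperm σ`. -/
lemma adjH_of {p : Fin nc × Fin N} {q : Fin nv × Fin N} (h : σ p.1 q.1 p.2 = q.2) :
    (tanner (Hperm σ)).Adj (Sum.inl p) (Sum.inr q) := by
  refine ⟨by simp, Or.inl ⟨p, q, rfl, rfl, ?_⟩⟩
  simp [Hperm, permMatrix, h]

lemma not_adjC_inl_inl {α β : Type*} (M : Matrix α β ℕ) (a a' : α) :
    ¬ (tanner M).Adj (Sum.inl a) (Sum.inl a') := by
  rintro ⟨hne, h | h⟩ <;> obtain ⟨x, y, hx, hy, -⟩ := h <;> simp at hx hy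

lemma not_adjC_inr_inr {α β : Type*} (M : Matrix α β ℕ) (b b' : β) :
    ¬ (tanner M).Adj (Sum.inr b) (Sum.inr b') := by
  rintro ⟨hne, h | h⟩ <;> obtain ⟨x, y, hx, hy, -⟩ := h <;> simp at hx hy

lemma adjC_exists {a b : Fin N}
    (h : (tanner (Cmat σ i j)).Adj (Sum.inl a) (Sum.inr b)) :
    ∃ k, σ i k a = σ j k b := by
  rw [← Cmat_ne_zero_iff σ i j]
  obtain ⟨-, h | h⟩ := h <;> obtain ⟨x, y, hx, hy, hM⟩ := h
  · cases hx; cases hy; exact hM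
  · simp at hx

/-- Map from the vertices of the Tanner graph of `Cmat` to those of `Hperm`. -/
def fV : Fin N ⊕ Fin N → (Fin nc × Fin N) ⊕ (Fin nv × Fin N)
  | .inl a => .inl (i, a)
  | .inr b => .inl (j, b)

lemma fV_inj (hij : i ≠ j) : Function.Injective (fV (N := N) (nv := nv) i j) := by
  rintro (a | a) (b | b) h <;>
    simp only [fV, Sum.inl.injEq, Prod.mk.injEq] at h
  · rw [h.2]
  · exact absurd h.1 hij
  · exact absurd h.1 hij.symm
  · rw [h.2]

/-- The middle vertex used to lift an edge `{inl a, inr b}` of `Cmat`'s Tanner graph. -/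
noncomputable def md (a b : Fin N) (h : ∃ k, σ i k a = σ j k b) :
    (Fin nc × Fin N) ⊕ (Fin nv × Fin N) :=
  .inr (h.choose, σ i h.choose a)

lemma md_inj {a b a' b' : Fin N} {h : ∃ k, σ i k a = σ j k b}
    {h' : ∃ k, σ i k a' = σ j k b'} (he : md σ i j a b h = md σ i j a' b' h') :
    a = a' ∧ b = b' := by
  have hs := h.choose_spec
  have hs' := h'.choose_spec
  obtain ⟨he1, he2⟩ : h.choose = h'.choose ∧ σ i h.choose a = σ i h'.choose a' := by
    simpa [md, Prod.ext_iff] using he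
  rw [← he1] at hs' he2
  have ha : a = a' := (σ i h.choose).injective he2
  subst ha
  exact ⟨rfl, (σ j h.choose).injective (by rw [← hs, ← hs'])⟩

/-- The middle vertex attached to an adjacency of `Cmat`'s Tanner graph. -/
noncomputable def mid : ∀ {u v : Fin N ⊕ Fin N},
    (tanner (Cmat σ i j)).Adj u v → (Fin nc × Fin N) ⊕ (Fin nv × Fin N)
  | .inl a, .inr b, h => md σ i j a b (adjC_exists σ i j h)
  | .inr b, .inl a, h => md σ i j a b (adjC_exists σ i j h.symm)
  | .inl _, .inl _, h => absurd h (not_adjC_inl_inl _ _ _)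
  | .inr _, .inr _, h => absurd h (not_adjC_inr_inr _ _ _)

lemma mid_isRight : ∀ {u v : Fin N ⊕ Fin N} (h : (tanner (Cmat σ i j)).Adj u v),
    ∃ z, mid σ i j h = .inr z
  | .inl a, .inr b, h => ⟨_, rfl⟩
  | .inr b, .inl a, h => ⟨_, rfl⟩
  | .inl _, .inl _, h => absurd h (not_adjC_inl_inl _ _ _)
  | .inr _, .inr _, h => absurd h (not_adjC_inr_inr _ _ _)

lemma fV_ne_mid {y u v : Fin N ⊕ Fin N} (h : (tanner (Cmat σ i j)).Adj u v) :
    fV i j y ≠ mid σ i j h := by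
  obtain ⟨z, hz⟩ := mid_isRight σ i j h
  rw [hz]
  cases y <;> simp [fV]

lemma mid_eq_mid : ∀ {u v u' v' : Fin N ⊕ Fin N}
    (h : (tanner (Cmat σ i j)).Adj u v) (h' : (tanner (Cmat σ i j)).Adj u' v'),
    mid σ i j h = mid σ i j h' → s(u, v) = s(u', v')
  | .inl a, .inr b, .inl a', .inr b', h, h', he => by
      obtain ⟨rfl, rfl⟩ := md_inj σ i j he; rfl
  | .inl a, .inr b, .inr b', .inl a', h, h', he => by
      obtain ⟨rfl, rfl⟩ := md_inj σ i j he; exact Sym2.eq_swap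
  | .inr b, .inl a, .inl a', .inr b', h, h', he => by
      obtain ⟨rfl, rfl⟩ := md_inj σ i j he; exact Sym2.eq_swap
  | .inr b, .inl a, .inr b', .inl a', h, h', he => by
      obtain ⟨rfl, rfl⟩ := md_inj σ i j he; rfl
  | .inl _, .inl _, _, _, h, _, _ => absurd h (not_adjC_inl_inl _ _ _)
  | .inr _, .inr _, _, _, h, _, _ => absurd h (not_adjC_inr_inr _ _ _)
  | _, _, .inl _, .inl _, _, h', _ => absurd h' (not_adjC_inl_inl _ _ _)
  | _, _, .inr _, .inr _, _, h', _ => absurd h' (not_adjC_inr_inr _ _ _)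


open SimpleGraph.Walk in
section

/-- Adjacency from the left endpoint to the middle vertex. -/
lemma adj_left_md {a b : Fin N} (ex : ∃ k, σ i k a = σ j k b) :
    (tanner (Hperm σ)).Adj (Sum.inl (i, a)) (md σ i j a b ex) :=
  adjH_of σ (p := (i, a)) (q := (ex.choose, σ i ex.choose a)) rfl

/-- Adjacency from the middle vertex to the right endpoint. -/
lemma adj_right_md {a b : Fin N} (ex : ∃ k, σ i k a = σ j k b) :
    (tanner (Hperm σ)).Adj (md σ i j a b ex) (Sum.inl (j, b)) :=
  (adjH_of σ (p := (j, b)) (q := (ex.choose, σ i ex.choose a)) ex.choose_spec.symm).symm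

/-- The length-2 walk in `Hperm`'s Tanner graph lifting an edge of `Cmat`'s Tanner graph. -/
noncomputable def step : ∀ {u v : Fin N ⊕ Fin N},
    (tanner (Cmat σ i j)).Adj u v → (tanner (Hperm σ)).Walk (fV i j u) (fV i j v)
  | .inl _, .inr _, h =>
      Walk.cons (adj_left_md σ i j (adjC_exists σ i j h))
        (Walk.cons (adj_right_md σ i j (adjC_exists σ i j h)) Walk.nil)
  | .inr _, .inl _, h =>
      Walk.cons (adj_right_md σ i j (adjC_exists σ i j h.symm)).symm
        (Walk.cons (adj_left_md σ i j (adjC_exists σ i j h.symm)).symm Walk.nil)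
  | .inl _, .inl _, h => absurd h (not_adjC_inl_inl _ _ _)
  | .inr _, .inr _, h => absurd h (not_adjC_inr_inr _ _ _)

lemma step_support : ∀ {u v : Fin N ⊕ Fin N} (h : (tanner (Cmat σ i j)).Adj u v),
    (step σ i j h).support = [fV i j u, mid σ i j h, fV i j v]
  | .inl _, .inr _, _ => rfl
  | .inr _, .inl _, _ => rfl
  | .inl _, .inl _, h => absurd h (not_adjC_inl_inl _ _ _)
  | .inr _, .inr _, h => absurd h (not_adjC_inr_inr _ _ _)

lemma step_edges : ∀ {u v : Fin N ⊕ Fin N} (h : (tanner (Cmat σ i j)).Adj u v),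
    (step σ i j h).edges = [s(fV i j u, mid σ i j h), s(mid σ i j h, fV i j v)]
  | .inl _, .inr _, _ => rfl
  | .inr _, .inl _, _ => rfl
  | .inl _, .inl _, h => absurd h (not_adjC_inl_inl _ _ _)
  | .inr _, .inr _, h => absurd h (not_adjC_inr_inr _ _ _)

lemma step_length : ∀ {u v : Fin N ⊕ Fin N} (h : (tanner (Cmat σ i j)).Adj u v),
    (step σ i j h).length = 2
  | .inl _, .inr _, _ => rfl
  | .inr _, .inl _, _ => rfl
  | .inl _, .inl _, h => absurd h (not_adjC_inl_inl _ _ _)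
  | .inr _, .inr _, h => absurd h (not_adjC_inr_inr _ _ _)

/-- Lift a walk of `Cmat`'s Tanner graph to a walk in `Hperm`'s Tanner graph. -/
noncomputable def lift : ∀ {u v : Fin N ⊕ Fin N},
    (tanner (Cmat σ i j)).Walk u v → (tanner (Hperm σ)).Walk (fV i j u) (fV i j v)
  | _, _, .nil => .nil
  | _, _, .cons h p => (step σ i j h).append (lift p)

lemma lift_length : ∀ {u v : Fin N ⊕ Fin N} (p : (tanner (Cmat σ i j)).Walk u v),
    (lift σ i j p).length = 2 * p.length
  | _, _, .nil => rfl
  | _, _, .cons h p => by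
      show ((step σ i j h).append (lift σ i j p)).length = _
      rw [Walk.length_append, step_length, lift_length p, Walk.length_cons]
      ring

lemma lift_support_cons {u v w : Fin N ⊕ Fin N} (h : (tanner (Cmat σ i j)).Adj u v)
    (p : (tanner (Cmat σ i j)).Walk v w) :
    (lift σ i j (Walk.cons h p)).support
      = fV i j u :: mid σ i j h :: (lift σ i j p).support := by
  show ((step σ i j h).append (lift σ i j p)).support = _
  rw [Walk.support_append, step_support]
  rw [Walk.support_eq_cons (lift σ i j p)]
  simp

lemma lift_edges_cons {u v w : Fin N ⊕ Fin N} (h : (tanner (Cmat σ i j)).Adj u v)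
    (p : (tanner (Cmat σ i j)).Walk v w) :
    (lift σ i j (Walk.cons h p)).edges
      = s(fV i j u, mid σ i j h) :: s(mid σ i j h, fV i j v) :: (lift σ i j p).edges := by
  show ((step σ i j h).append (lift σ i j p)).edges = _
  rw [Walk.edges_append, step_edges]
  simp

lemma mem_support_lift : ∀ {u v : Fin N ⊕ Fin N} (p : (tanner (Cmat σ i j)).Walk u v)
    {x}, x ∈ (lift σ i j p).support →
    (∃ y ∈ p.support, x = fV i j y) ∨
      ∃ u' v', ∃ h' : (tanner (Cmat σ i j)).Adj u' v',
        s(u', v') ∈ p.edges ∧ x = mid σ i j h'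
  | _, _, .nil, x, hx => by
      simp only [lift, Walk.support_nil, List.mem_singleton] at hx
      exact Or.inl ⟨_, by simp, hx⟩
  | _, _, .cons h p, x, hx => by
      rw [lift_support_cons] at hx
      rcases List.mem_cons.mp hx with rfl | hx
      · exact Or.inl ⟨_, by simp, rfl⟩
      rcases List.mem_cons.mp hx with rfl | hx
      · exact Or.inr ⟨_, _, h, by simp, rfl⟩
      rcases mem_support_lift p hx with ⟨y, hy, rfl⟩ | ⟨u', v', h', he, rfl⟩
      · exact Or.inl ⟨y, by simp [hy], rfl⟩
      · exact Or.inr ⟨u', v', h', by simp [he], rfl⟩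

lemma mem_edges_lift : ∀ {u v : Fin N ⊕ Fin N} (p : (tanner (Cmat σ i j)).Walk u v)
    {e}, e ∈ (lift σ i j p).edges →
    ∃ u' v', ∃ h' : (tanner (Cmat σ i j)).Adj u' v',
      s(u', v') ∈ p.edges ∧
        (e = s(fV i j u', mid σ i j h') ∨ e = s(mid σ i j h', fV i j v'))
  | _, _, .nil, e, he => by simp [lift] at he
  | _, _, .cons h p, e, he => by
      rw [lift_edges_cons] at he
      rcases List.mem_cons.mp he with rfl | he
      · exact ⟨_, _, h, by simp, Or.inl rfl⟩
      rcases List.mem_cons.mp he with rfl | he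
      · exact ⟨_, _, h, by simp, Or.inr rfl⟩
      obtain ⟨u', v', h', hin, hcase⟩ := mem_edges_lift p he
      exact ⟨u', v', h', by simp [hin], hcase⟩

lemma lift_support_nodup (hij : i ≠ j) :
    ∀ {u v : Fin N ⊕ Fin N} (p : (tanner (Cmat σ i j)).Walk u v),
    p.support.Nodup → p.edges.Nodup → (lift σ i j p).support.Nodup
  | _, _, .nil, _, _ => by simp [lift]
  | _, _, .cons h p, hs, he => by
      rw [lift_support_cons]
      rw [Walk.support_cons, List.nodup_cons] at hs
      rw [Walk.edges_cons, List.nodup_cons] at he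
      refine List.nodup_cons.mpr ⟨?_, List.nodup_cons.mpr
        ⟨?_, lift_support_nodup hij p hs.2 he.2⟩⟩
      · intro hmem
        rcases List.mem_cons.mp hmem with heq | hmem
        · exact fV_ne_mid σ i j h heq
        · rcases mem_support_lift σ i j p hmem with ⟨y, hy, hxy⟩ | ⟨u', v', h', _, hxy⟩
          · exact hs.1 (fV_inj i j hij hxy ▸ hy)
          · exact fV_ne_mid σ i j h' hxy
      · intro hmem
        rcases mem_support_lift σ i j p hmem with ⟨y, hy, hxy⟩ | ⟨u', v', h', hin, hxy⟩
        · exact fV_ne_mid σ i j h hxy.symm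
        · exact he.1 (by rw [mid_eq_mid σ i j h h' hxy]; exact hin)

lemma lift_edges_nodup (hij : i ≠ j) :
    ∀ {u v : Fin N ⊕ Fin N} (p : (tanner (Cmat σ i j)).Walk u v),
    p.edges.Nodup → (lift σ i j p).edges.Nodup
  | _, _, .nil, _ => by simp [lift]
  | _, _, .cons h p, he => by
      rw [lift_edges_cons]
      rw [Walk.edges_cons, List.nodup_cons] at he
      refine List.nodup_cons.mpr ⟨?_, List.nodup_cons.mpr
        ⟨?_, lift_edges_nodup hij p he.2⟩⟩
      · intro hmem
        rcases List.mem_cons.mp hmem with heq | hmem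
        · rcases Sym2.eq_iff.mp heq with ⟨h1, _⟩ | ⟨h1, _⟩
          · exact fV_ne_mid σ i j h h1
          · exact h.ne (fV_inj i j hij h1)
        · obtain ⟨u', v', h', hin, hE | hE⟩ := mem_edges_lift σ i j p hmem
          · rcases Sym2.eq_iff.mp hE with ⟨_, h2⟩ | ⟨h1, _⟩
            · exact he.1 (by rw [mid_eq_mid σ i j h h' h2]; exact hin)
            · exact fV_ne_mid σ i j h' h1
          · rcases Sym2.eq_iff.mp hE with ⟨h1, _⟩ | ⟨_, h2⟩
            · exact fV_ne_mid σ i j h' h1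
            · exact he.1 (by rw [mid_eq_mid σ i j h h' h2]; exact hin)
      · intro hmem
        obtain ⟨u', v', h', hin, hE | hE⟩ := mem_edges_lift σ i j p hmem
        · rcases Sym2.eq_iff.mp hE with ⟨h1, _⟩ | ⟨h2, _⟩
          · exact fV_ne_mid σ i j h h1.symm
          · exact he.1 (by rw [mid_eq_mid σ i j h h' h2]; exact hin)
        · rcases Sym2.eq_iff.mp hE with ⟨h1, _⟩ | ⟨h1, _⟩
          · exact he.1 (by rw [mid_eq_mid σ i j h h' h1]; exact hin)
          · exact fV_ne_mid σ i j h h1.symm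

lemma lift_isCycle (hij : i ≠ j) {u : Fin N ⊕ Fin N}
    (w : (tanner (Cmat σ i j)).Walk u u) (hw : w.IsCycle) :
    (lift σ i j w).IsCycle := by
  cases w with
  | nil => exact absurd rfl hw.ne_nil
  | @cons _ v _ h p =>
    rw [Walk.isCycle_def] at hw ⊢
    obtain ⟨ht, -, hnd⟩ := hw
    rw [Walk.isTrail_def] at ht
    have hlen : (lift σ i j (Walk.cons h p)).length = 2 * (p.length + 1) := by
      rw [lift_length]; simp
    refine ⟨(Walk.isTrail_def _).mpr (lift_edges_nodup σ i j hij _ ht), ?_, ?_⟩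
    · intro hn
      rw [hn] at hlen
      simp at hlen
    · rw [lift_support_cons, List.tail_cons]
      rw [Walk.support_cons, List.tail_cons] at hnd
      rw [Walk.edges_cons, List.nodup_cons] at ht
      refine List.nodup_cons.mpr ⟨?_, lift_support_nodup σ i j hij p hnd ht.2⟩
      intro hmem
      rcases mem_support_lift σ i j p hmem with ⟨y, _, hxy⟩ | ⟨u', v', h', hin, hxy⟩
      · exact fV_ne_mid σ i j h hxy.symm
      · exact ht.1 (by rw [mid_eq_mid σ i j h h' hxy]; exact hin)

end

end Stmt17Aux

theorem stmt17 {N nc nv : ℕ} (σ : Fin nc → Fin nv → Equiv.Perm (Fin N))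
    (m : ℕ) (hm : 2 ≤ m)
    (h : ((2 * m : ℕ) : ℕ∞) < (tanner (Hperm σ)).egirth) :
    ∀ i j : Fin nc, i < j →
      (m : ℕ∞) < matGirth (∑ k, permMatrix (σ i k) * (permMatrix (σ j k))ᵀ) := by
  intro i j hij
  have hijne : i ≠ j := ne_of_lt hij
  have key4 : ∀ (a b : Fin N) (k k' : Fin nv), k ≠ k' →
      σ i k a = σ j k b → σ i k' a = σ j k' b → False := by
    intro a b k k' hkk h1 h1'
    have e1 : (tanner (Hperm σ)).Adj (Sum.inl (i, a)) (Sum.inr (k, σ i k a)) :=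
      Stmt17Aux.adjH_of σ rfl
    have e2 : (tanner (Hperm σ)).Adj (Sum.inr (k, σ i k a)) (Sum.inl (j, b)) :=
      (Stmt17Aux.adjH_of σ (p := (j, b)) (q := (k, σ i k a)) h1.symm).symm
    have e3 : (tanner (Hperm σ)).Adj (Sum.inl (j, b)) (Sum.inr (k', σ i k' a)) :=
      Stmt17Aux.adjH_of σ (p := (j, b)) (q := (k', σ i k' a)) h1'.symm
    have e4 : (tanner (Hperm σ)).Adj (Sum.inr (k', σ i k' a)) (Sum.inl (i, a)) :=
      (Stmt17Aux.adjH_of σ (p := (i, a)) (q := (k', σ i k' a)) rfl).symm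
    set w : (tanner (Hperm σ)).Walk (Sum.inl (i, a)) (Sum.inl (i, a)) :=
      SimpleGraph.Walk.cons e1 (SimpleGraph.Walk.cons e2
        (SimpleGraph.Walk.cons e3 (SimpleGraph.Walk.cons e4 SimpleGraph.Walk.nil))) with hw
    have hcyc : w.IsCycle := by
      rw [SimpleGraph.Walk.isCycle_def, SimpleGraph.Walk.isTrail_def]
      refine ⟨?_, by simp [hw], ?_⟩ <;>
        simp [hw, Sym2.eq_iff, Prod.ext_iff, hijne, hijne.symm, hkk, hkk.symm]
    have hle4 : (tanner (Hperm σ)).egirth ≤ ((4 : ℕ) : ℕ∞) :=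
      SimpleGraph.le_egirth.mp le_rfl _ w hcyc
    have hlt : (2 * m : ℕ) < (4 : ℕ) := by exact_mod_cast lt_of_lt_of_le h hle4
    omega
  unfold matGirth
  split_ifs with h2
  · exfalso
    obtain ⟨a, b, hab⟩ := h2
    obtain ⟨k, k', hkk, h1, h1'⟩ := (Stmt17Aux.two_le_Cmat_iff σ i j).mp hab
    exact key4 a b k k' hkk h1 h1'
  · by_contra hcon
    push_neg at hcon
    have hnac : ¬ (tanner (Stmt17Aux.Cmat σ i j)).IsAcyclic := by
      intro hac
      rw [hac.egirth_eq_top] at hcon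
      exact absurd hcon (by simp)
    obtain ⟨a, w, hwc, hlen⟩ := SimpleGraph.exists_egirth_eq_length.mpr hnac
    have hwl : w.length ≤ m := by
      rw [hlen] at hcon
      exact_mod_cast hcon
    have hc2 := Stmt17Aux.lift_isCycle σ i j hijne w hwc
    have hlift : (tanner (Hperm σ)).egirth ≤ ((Stmt17Aux.lift σ i j w).length : ℕ∞) :=
      SimpleGraph.le_egirth.mp le_rfl _ _ hc2
    rw [Stmt17Aux.lift_length] at hlift
    have h2m : ((2 * w.length : ℕ) : ℕ∞) ≤ ((2 * m : ℕ) : ℕ∞) := by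
      exact_mod_cast (by omega : 2 * w.length ≤ 2 * m)
    exact absurd (lt_of_lt_of_le h (le_trans hlift h2m)) (lt_irrefl _)
end

section
/- Let C_H be the n_cN × n_cN block matrix with zero diagonal blocks and off-diagonal blocks C_{ij} = Σ_{k=1}^{n_v} P_{ik} P_{jk}ᵀ built from N × N permutation matrices P_{ij} with n_v ≥ 2. If n_c ≥ 3, then the Tanner graph of C_H contains a cycle of length at most 6; if n_c ≥ 4, it contains a cycle of length at most 4. -/
open Matrix

/-- The block matrix `C_H` with zero diagonal blocks and off-diagonal blocks
`C_{ij} = Σ_k P_{ik} P_{jk}ᵀ`. -/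
def CHmat {N nc nv : ℕ} (σ : Fin nc → Fin nv → Equiv.Perm (Fin N)) :
    Matrix (Fin nc × Fin N) (Fin nc × Fin N) ℕ :=
  Matrix.of fun p q =>
    if p.1 = q.1 then 0
    else (∑ k, permMatrix (σ p.1 k) * (permMatrix (σ q.1 k))ᵀ) p.2 q.2

lemma CH_ne {N nc nv : ℕ} (hnv : 2 ≤ nv)
    (σ : Fin nc → Fin nv → Equiv.Perm (Fin N)) {i j : Fin nc} (hij : i ≠ j) (x : Fin N) :
    CHmat σ (i, (σ i ⟨0, by omega⟩)⁻¹ x) (j, (σ j ⟨0, by omega⟩)⁻¹ x) ≠ 0 := by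
  set k0 : Fin nv := ⟨0, by omega⟩
  simp only [CHmat, Matrix.of_apply, hij, if_false]
  intro h
  rw [Matrix.sum_apply, Finset.sum_eq_zero_iff] at h
  have := h k0 (Finset.mem_univ _)
  rw [Matrix.mul_apply, Finset.sum_eq_zero_iff] at this
  have := this x (Finset.mem_univ _)
  simp [permMatrix] at this

lemma tanner_adj_s18 {N nc nv : ℕ} (hnv : 2 ≤ nv)
    (σ : Fin nc → Fin nv → Equiv.Perm (Fin N)) {i j : Fin nc} (hij : i ≠ j) (x : Fin N) :
    (tanner (CHmat σ)).Adj (Sum.inl (i, (σ i ⟨0, by omega⟩)⁻¹ x))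
      (Sum.inr (j, (σ j ⟨0, by omega⟩)⁻¹ x)) :=
  ⟨by simp, Or.inl ⟨_, _, rfl, rfl, CH_ne hnv σ hij x⟩⟩

lemma egirth_le' {α : Type*} {G : SimpleGraph α} {a : α} (w : G.Walk a a) (hw : w.IsCycle) :
    G.egirth ≤ w.length :=
  SimpleGraph.le_egirth.mp le_rfl a w hw

theorem stmt18 {N nc nv : ℕ} (hN : 0 < N) (hnv : 2 ≤ nv)
    (σ : Fin nc → Fin nv → Equiv.Perm (Fin N)) :
    (3 ≤ nc → matGirth (CHmat σ) ≤ 6) ∧ (4 ≤ nc → matGirth (CHmat σ) ≤ 4) := by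
  classical
  set x : Fin N := ⟨0, hN⟩ with hx
  set G := tanner (CHmat σ) with hG
  have adj : ∀ {i j : Fin nc}, i ≠ j →
      G.Adj (Sum.inl (i, (σ i ⟨0, by omega⟩)⁻¹ x)) (Sum.inr (j, (σ j ⟨0, by omega⟩)⁻¹ x)) :=
    fun hij => tanner_adj_s18 hnv σ hij x
  have key : ∀ n : ℕ∞, 2 ≤ n →
      (∃ a, ∃ w : G.Walk a a, w.IsCycle ∧ (w.length : ℕ∞) ≤ n) →
      matGirth (CHmat σ) ≤ n := by
    rintro n h2 ⟨a, w, hw, hl⟩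
    unfold matGirth
    split
    · exact h2
    · exact le_trans (egirth_le' w hw) hl
  constructor
  · intro hnc
    refine key 6 (by norm_num) ?_
    set i0 : Fin nc := ⟨0, by omega⟩
    set i1 : Fin nc := ⟨1, by omega⟩
    set i2 : Fin nc := ⟨2, by omega⟩
    have h01 : i0 ≠ i1 := by simp [i0, i1, Fin.ext_iff]
    have h02 : i0 ≠ i2 := by simp [i0, i2, Fin.ext_iff]
    have h12 : i1 ≠ i2 := by simp [i1, i2, Fin.ext_iff]
    let v : Fin nc → Fin N := fun i => (σ i ⟨0, by omega⟩)⁻¹ x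
    let w : G.Walk (Sum.inl (i0, v i0)) (Sum.inl (i0, v i0)) :=
      .cons (adj h01) (.cons (adj h12.symm).symm (.cons (adj h02.symm)
        (.cons (adj h01.symm).symm (.cons (adj h12) (.cons (adj h02).symm .nil)))))
    refine ⟨_, w, ?_, by norm_num [w]⟩
    rw [SimpleGraph.Walk.isCycle_def, SimpleGraph.Walk.isTrail_def]
    refine ⟨?_, by simp [w], ?_⟩
    · simp [w, Sym2.eq, Sym2.rel_iff', h01, h02, h12, h01.symm, h02.symm, h12.symm]
    · simp [w, h01, h02, h12, h01.symm, h02.symm, h12.symm]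
  · intro hnc
    refine key 4 (by norm_num) ?_
    set i0 : Fin nc := ⟨0, by omega⟩
    set i1 : Fin nc := ⟨1, by omega⟩
    set i2 : Fin nc := ⟨2, by omega⟩
    set i3 : Fin nc := ⟨3, by omega⟩
    have h01 : i0 ≠ i1 := by simp [i0, i1, Fin.ext_iff]
    have h02 : i0 ≠ i2 := by simp [i0, i2, Fin.ext_iff]
    have h03 : i0 ≠ i3 := by simp [i0, i3, Fin.ext_iff]
    have h12 : i1 ≠ i2 := by simp [i1, i2, Fin.ext_iff]
    have h13 : i1 ≠ i3 := by simp [i1, i3, Fin.ext_iff]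
    have h23 : i2 ≠ i3 := by simp [i2, i3, Fin.ext_iff]
    let v : Fin nc → Fin N := fun i => (σ i ⟨0, by omega⟩)⁻¹ x
    let w : G.Walk (Sum.inl (i0, v i0)) (Sum.inl (i0, v i0)) :=
      .cons (adj h02) (.cons (adj h12).symm (.cons (adj h13) (.cons (adj h03).symm .nil)))
    refine ⟨_, w, ?_, by norm_num [w]⟩
    rw [SimpleGraph.Walk.isCycle_def, SimpleGraph.Walk.isTrail_def]
    refine ⟨?_, by simp [w], ?_⟩
    · simp [w, Sym2.eq, Sym2.rel_iff', h01, h02, h03, h12, h13, h23, h01.symm, h02.symm, h03.symm,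
        h12.symm, h13.symm, h23.symm]
    · simp [w, h01, h02, h03, h12, h13, h23, h01.symm, h02.symm, h03.symm, h12.symm, h13.symm,
        h23.symm]
end

section
/- Every N × N circulant permutation matrix with N = N₁N₂ is permutation-equivalent (via simultaneous row and column reorderings) to an N₁ × N₁ block matrix whose blocks are N₂ × N₂ circulant permutation matrices: specifically, the circulant x^{N₁ a + r} (0 ≤ r < N₁) is equivalent to the N₁ × N₁ array having block x^{a+1} in positions (k, k+r mod N₁) with k + r ≥ N₁ and block x^{a} in positions (k, k+r mod N₁) with k + r < N₁, and zero elsewhere. -/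
private lemma sub_key (N₁ N₂ x₁ x₂ y₁ y₂ : ℕ) (hx : x₁ < N₁) (hy : y₁ < N₁) :
    (N₁ * x₂ + x₁ ≡ N₁ * y₂ + y₁ [MOD N₁ * N₂]) ↔ (x₁ = y₁ ∧ x₂ ≡ y₂ [MOD N₂]) := by
  have hN₁ : 0 < N₁ := Nat.lt_of_le_of_lt (Nat.zero_le x₁) hx
  have hN₁' : (N₁ : ℤ) ≠ 0 := by exact_mod_cast hN₁.ne'
  rw [Nat.modEq_iff_dvd, Nat.modEq_iff_dvd]
  push_cast
  constructor
  · intro h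
    have hd : (N₁ : ℤ) ∣ (N₁ : ℤ) * N₂ := Dvd.intro _ rfl
    have h2 : (N₁ : ℤ) ∣ (N₁ * y₂ + y₁) - (N₁ * x₂ + x₁) := hd.trans h
    have h3 : (N₁ : ℤ) ∣ (N₁ : ℤ) * y₂ - N₁ * x₂ := by
      rw [← mul_sub]; exact Dvd.intro _ rfl
    have h1 : (N₁ : ℤ) ∣ (y₁ : ℤ) - x₁ := by
      have := h2.sub h3
      convert this using 1
      · rfl
      · ring
    have hxy : x₁ = y₁ := by
      have := (Nat.modEq_iff_dvd (n := N₁)).2 h1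
      rwa [Nat.ModEq, Nat.mod_eq_of_lt hx, Nat.mod_eq_of_lt hy] at this
    refine ⟨hxy, ?_⟩
    have h4 : (N₁ : ℤ) * N₂ ∣ (N₁ : ℤ) * ((y₂ : ℤ) - x₂) := by
      convert h using 1; rw [hxy]; ring
    exact (mul_dvd_mul_iff_left hN₁').1 h4
  · rintro ⟨hxy, h⟩
    subst hxy
    have : (N₁ : ℤ) * N₂ ∣ (N₁ : ℤ) * ((y₂ : ℤ) - x₂) := mul_dvd_mul_left _ h
    convert this using 1; ring

private lemma key (N₁ N₂ r a i j : ℕ) (hN₁ : 0 < N₁) (hr : r < N₁) :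
    (j ≡ i + (N₁ * a + r) [MOD N₁ * N₂]) ↔
    ((j % N₁ ≡ i % N₁ + r [MOD N₁]) ∧
      (j / N₁ ≡ i / N₁ + (if N₁ ≤ i % N₁ + r then a + 1 else a) [MOD N₂])) := by
  obtain ⟨i₁, hi₁, i₂, rfl⟩ : ∃ i₁, i₁ < N₁ ∧ ∃ i₂, i = N₁ * i₂ + i₁ :=
    ⟨i % N₁, Nat.mod_lt _ hN₁, i / N₁, (Nat.div_add_mod i N₁).symm⟩
  obtain ⟨j₁, hj₁, j₂, rfl⟩ : ∃ j₁, j₁ < N₁ ∧ ∃ j₂, j = N₁ * j₂ + j₁ :=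
    ⟨j % N₁, Nat.mod_lt _ hN₁, j / N₁, (Nat.div_add_mod j N₁).symm⟩
  have mod₁ : (N₁ * i₂ + i₁) % N₁ = i₁ := by rw [Nat.mul_add_mod, Nat.mod_eq_of_lt hi₁]
  have mod₂ : (N₁ * j₂ + j₁) % N₁ = j₁ := by rw [Nat.mul_add_mod, Nat.mod_eq_of_lt hj₁]
  have div₁ : (N₁ * i₂ + i₁) / N₁ = i₂ := by
    rw [Nat.mul_add_div hN₁, Nat.div_eq_of_lt hi₁, Nat.add_zero]
  have div₂ : (N₁ * j₂ + j₁) / N₁ = j₂ := by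
    rw [Nat.mul_add_div hN₁, Nat.div_eq_of_lt hj₁, Nat.add_zero]
  rw [mod₁, mod₂, div₁, div₂]
  by_cases hc : N₁ ≤ i₁ + r
  · rw [if_pos hc]
    obtain ⟨s, hseq⟩ : ∃ s, i₁ + r = N₁ + s := ⟨i₁ + r - N₁, by omega⟩
    have hs : s < N₁ := by omega
    have hrw : N₁ * i₂ + i₁ + (N₁ * a + r) = N₁ * (i₂ + (a + 1)) + s := by
      have : N₁ * i₂ + i₁ + (N₁ * a + r) = N₁ * i₂ + N₁ * a + (i₁ + r) := by ring
      rw [this, hseq]; ring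
    rw [hrw, sub_key N₁ N₂ j₁ j₂ s (i₂ + (a + 1)) hj₁ hs]
    have h1 : (j₁ ≡ i₁ + r [MOD N₁]) ↔ j₁ = s := by
      rw [Nat.ModEq, hseq, Nat.add_mod_left, Nat.mod_eq_of_lt hj₁, Nat.mod_eq_of_lt hs]
    rw [h1]
  · rw [if_neg hc]
    have hs : i₁ + r < N₁ := by omega
    have hrw : N₁ * i₂ + i₁ + (N₁ * a + r) = N₁ * (i₂ + a) + (i₁ + r) := by ring
    rw [hrw, sub_key N₁ N₂ j₁ j₂ (i₁ + r) (i₂ + a) hj₁ hs]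
    have h1 : (j₁ ≡ i₁ + r [MOD N₁]) ↔ j₁ = i₁ + r := by
      rw [Nat.ModEq, Nat.mod_eq_of_lt hj₁, Nat.mod_eq_of_lt hs]
    rw [h1]

theorem stmt19 (N₁ N₂ : ℕ) (hN₁ : 0 < N₁) (hN₂ : 0 < N₂) (r a : ℕ) (hr : r < N₁) :
    ∃ e : Fin (N₁ * N₂) ≃ Fin N₁ × Fin N₂,
      ∀ i j, circ (N₁ * N₂) ((N₁ * a + r : ℕ) : ZMod (N₁ * N₂)) i j =
        (Matrix.of fun (p q : Fin N₁ × Fin N₂) =>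
          if ((q.1 : ℕ) : ZMod N₁) = ((p.1 : ℕ) : ZMod N₁) + (r : ZMod N₁) then
            (if N₁ ≤ (p.1 : ℕ) + r then circ N₂ ((a + 1 : ℕ) : ZMod N₂)
             else circ N₂ ((a : ℕ) : ZMod N₂)) p.2 q.2
          else 0) (e i) (e j) := by
  refine ⟨{
    toFun := fun i => (⟨(i : ℕ) % N₁, Nat.mod_lt _ hN₁⟩, ⟨(i : ℕ) / N₁, Nat.div_lt_of_lt_mul i.isLt⟩)
    invFun := fun p => ⟨(p.1 : ℕ) + N₁ * (p.2 : ℕ), by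
      calc (p.1 : ℕ) + N₁ * (p.2 : ℕ) < N₁ + N₁ * (p.2 : ℕ) := by
            exact Nat.add_lt_add_right p.1.isLt _
        _ = N₁ * ((p.2 : ℕ) + 1) := by ring
        _ ≤ N₁ * N₂ := Nat.mul_le_mul_left _ p.2.isLt⟩
    left_inv := fun i => by
      ext
      simp [Nat.mod_add_div]
    right_inv := fun p => by
      ext
      · simp [Nat.add_mul_mod_self_left, Nat.mod_eq_of_lt p.1.isLt]
      · simp [Nat.add_mul_div_left _ _ hN₁, Nat.div_eq_of_lt p.1.isLt]
  }, ?_⟩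
  intro i j
  simp only [circ, Matrix.of_apply, Equiv.coe_fn_mk]
  have hkey := key N₁ N₂ r a (i : ℕ) (j : ℕ) hN₁ hr
  have hL : (((j : ℕ) : ZMod (N₁ * N₂)) = ((i : ℕ) : ZMod (N₁ * N₂)) + ((N₁ * a + r : ℕ) : ZMod (N₁ * N₂)))
      ↔ ((j : ℕ) ≡ (i : ℕ) + (N₁ * a + r) [MOD N₁ * N₂]) := by
    rw [← Nat.cast_add, ZMod.natCast_eq_natCast_iff]
  have hR1 : ((((j : ℕ) % N₁ : ℕ) : ZMod N₁) = (((i : ℕ) % N₁ : ℕ) : ZMod N₁) + (r : ZMod N₁))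
      ↔ ((j : ℕ) % N₁ ≡ (i : ℕ) % N₁ + r [MOD N₁]) := by
    rw [← Nat.cast_add, ZMod.natCast_eq_natCast_iff]
  by_cases h1 : ((j : ℕ) % N₁ ≡ (i : ℕ) % N₁ + r [MOD N₁])
  · rw [if_pos (hR1.2 h1)]
    by_cases hc : N₁ ≤ (i : ℕ) % N₁ + r
    · rw [if_pos hc]
      simp only [circ, Matrix.of_apply]
      have hR2 : ((((j : ℕ) / N₁ : ℕ) : ZMod N₂) = (((i : ℕ) / N₁ : ℕ) : ZMod N₂) + ((a + 1 : ℕ) : ZMod N₂))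
          ↔ ((j : ℕ) / N₁ ≡ (i : ℕ) / N₁ + (a + 1) [MOD N₂]) := by
        rw [← Nat.cast_add, ZMod.natCast_eq_natCast_iff]
      by_cases h2 : ((j : ℕ) / N₁ ≡ (i : ℕ) / N₁ + (a + 1) [MOD N₂])
      · rw [if_pos (hR2.2 h2), if_pos (hL.2 (hkey.2 ⟨h1, by simpa [hc] using h2⟩))]
      · rw [if_neg (fun h => h2 (hR2.1 h)), if_neg (fun h => by
          have := hkey.1 (hL.1 h)
          simp only [if_pos hc] at this
          exact h2 this.2)]
    · rw [if_neg hc]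
      simp only [circ, Matrix.of_apply]
      have hR2 : ((((j : ℕ) / N₁ : ℕ) : ZMod N₂) = (((i : ℕ) / N₁ : ℕ) : ZMod N₂) + ((a : ℕ) : ZMod N₂))
          ↔ ((j : ℕ) / N₁ ≡ (i : ℕ) / N₁ + a [MOD N₂]) := by
        rw [← Nat.cast_add, ZMod.natCast_eq_natCast_iff]
      by_cases h2 : ((j : ℕ) / N₁ ≡ (i : ℕ) / N₁ + a [MOD N₂])
      · rw [if_pos (hR2.2 h2), if_pos (hL.2 (hkey.2 ⟨h1, by simpa [hc] using h2⟩))]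
      · rw [if_neg (fun h => h2 (hR2.1 h)), if_neg (fun h => by
          have := hkey.1 (hL.1 h)
          simp only [if_neg hc] at this
          exact h2 this.2)]
  · rw [if_neg (fun h => h1 (hR1.1 h))]
    rw [if_neg (fun h => h1 (hkey.1 (hL.1 h)).1)]
end
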